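/- arXiv:1407.1597 — 4 statements merged into one kernel-verified Lean document; each statement's English description precedes it below -/
import Mathlib

section
/- Let ν > 0 and n, p ∈ ℕ. Let X and Y be two independent positive random variables on a probability space such that P[X ≥ z] ≍ z^{-ν} (log z)^n as z → ∞ and P[Y ≥ z] ≍ z^{-ν} (log z)^p as z → ∞. Then P[X·Y ≥ z] ≍ z^{-ν} (log z)^{n+p+1} as z → ∞. -/
open MeasureTheory ProbabilityTheory Real

/-- `AsympAtTop f g` : there exist constants `0 < κ₁ ≤ κ₂ < ∞` and `z₀ > 0` such that
`κ₁ f(z) ≤ g(z) ≤ κ₂ f(z)` for all `z ≥ z₀`. -/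
def AsympAtTop (f g : ℝ → ℝ) : Prop :=
  ∃ κ₁ κ₂ z₀ : ℝ, 0 < κ₁ ∧ κ₁ ≤ κ₂ ∧ 0 < z₀ ∧
    ∀ z, z₀ ≤ z → κ₁ * f z ≤ g z ∧ g z ≤ κ₂ * f z


lemma tail_split {Ω : Type*} [MeasureSpace Ω] [IsProbabilityMeasure (ℙ : Measure Ω)]
    {X : Ω → ℝ} (hXm : Measurable X) {a b : ℝ} (hab : a ≤ b) :
    (ℙ (X ⁻¹' Set.Ico a b)).toReal
      = (ℙ {ω | a ≤ X ω}).toReal - (ℙ {ω | b ≤ X ω}).toReal := by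
  have h1 : {ω | a ≤ X ω} = X ⁻¹' Set.Ico a b ∪ {ω | b ≤ X ω} := by
    rw [show {ω | b ≤ X ω} = X ⁻¹' Set.Ici b from rfl, ← Set.preimage_union,
      Set.Ico_union_Ici_eq_Ici hab]
    rfl
  have hd : Disjoint (X ⁻¹' Set.Ico a b) (X ⁻¹' Set.Ici b) :=
    Set.disjoint_left.2 fun ω h1 h2 => absurd h1.2 (not_lt.2 h2)
  have h2 : ℙ {ω | a ≤ X ω} = ℙ (X ⁻¹' Set.Ico a b) + ℙ {ω | b ≤ X ω} := by
    rw [h1]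
    exact measure_union hd (hXm measurableSet_Ici)
  rw [h2, ENNReal.toReal_add (measure_ne_top _ _) (measure_ne_top _ _)]
  ring

lemma prob_lower {Ω : Type*} [MeasureSpace Ω] [IsProbabilityMeasure (ℙ : Measure Ω)]
    {X Y : Ω → ℝ} (hXm : Measurable X) (hYm : Measurable Y)
    (hindep : IndepFun X Y ℙ) (s : ℕ → ℝ) (hs : Monotone s) (hs0 : 0 < s 0)
    (m : ℕ) (z : ℝ) (hz : 0 ≤ z) :
    ∑ j ∈ Finset.range m,
      ((ℙ {ω | s j ≤ X ω}).toReal - (ℙ {ω | s (j+1) ≤ X ω}).toReal)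
        * (ℙ {ω | z / s j ≤ Y ω}).toReal
      ≤ (ℙ {ω | z ≤ X ω * Y ω}).toReal := by
  have hsj : ∀ j, 0 < s j := fun j => lt_of_lt_of_le hs0 (hs (Nat.zero_le j))
  set A : ℕ → Set Ω := fun j =>
    X ⁻¹' Set.Ico (s j) (s (j+1)) ∩ Y ⁻¹' Set.Ici (z / s j) with hA
  have hAmeas : ∀ j, MeasurableSet (A j) := fun j =>
    (hXm measurableSet_Ico).inter (hYm measurableSet_Ici)
  have hAsub : ∀ j, A j ⊆ {ω | z ≤ X ω * Y ω} := by
    intro j ω hω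
    obtain ⟨⟨h1, h2⟩, h3⟩ := hω
    have h3' : z / s j ≤ Y ω := h3
    have hY0 : 0 ≤ Y ω := le_trans (div_nonneg hz (hsj j).le) h3'
    calc z = s j * (z / s j) := (mul_div_cancel₀ z (hsj j).ne').symm
      _ ≤ X ω * Y ω := mul_le_mul h1 h3' (div_nonneg hz (hsj j).le)
          (le_trans (hsj j).le h1)
  have hdisj : (↑(Finset.range m) : Set ℕ).PairwiseDisjoint A := by
    have key : ∀ i j : ℕ, i < j → Disjoint (A i) (A j) := by
      intro i j h
      have hd : Disjoint (Set.Ico (s i) (s (i+1))) (Set.Ico (s j) (s (j+1))) :=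
        Set.Ico_disjoint_Ico.2 (le_trans (min_le_left _ _)
          (le_trans (hs (Nat.succ_le_of_lt h)) (le_max_right _ _)))
      exact ((hd.preimage X).mono Set.inter_subset_left Set.inter_subset_left)
    intro i _ j _ hij
    rcases lt_or_gt_of_ne hij with h | h
    · exact key i j h
    · exact (key j i h).symm
  have hsum : ℙ (⋃ j ∈ Finset.range m, A j) = ∑ j ∈ Finset.range m, ℙ (A j) :=
    measure_biUnion_finset hdisj fun j _ => hAmeas j
  have hAj : ∀ j, (ℙ (A j)).toReal
      = ((ℙ {ω | s j ≤ X ω}).toReal - (ℙ {ω | s (j+1) ≤ X ω}).toReal)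
        * (ℙ {ω | z / s j ≤ Y ω}).toReal := by
    intro j
    rw [hA]
    rw [hindep.measure_inter_preimage_eq_mul _ _ measurableSet_Ico measurableSet_Ici,
      ENNReal.toReal_mul, tail_split hXm (hs (Nat.le_succ j))]
    rfl
  calc ∑ j ∈ Finset.range m,
      ((ℙ {ω | s j ≤ X ω}).toReal - (ℙ {ω | s (j+1) ≤ X ω}).toReal)
        * (ℙ {ω | z / s j ≤ Y ω}).toReal
      = ∑ j ∈ Finset.range m, (ℙ (A j)).toReal := by
        refine Finset.sum_congr rfl fun j _ => (hAj j).symm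
    _ = (∑ j ∈ Finset.range m, ℙ (A j)).toReal :=
        (ENNReal.toReal_sum fun j _ => measure_ne_top _ _).symm
    _ = (ℙ (⋃ j ∈ Finset.range m, A j)).toReal := by rw [hsum]
    _ ≤ (ℙ {ω | z ≤ X ω * Y ω}).toReal := by
        apply ENNReal.toReal_mono (measure_ne_top _ _)
        exact measure_mono (Set.iUnion₂_subset fun j _ => hAsub j)


lemma prob_upper {Ω : Type*} [MeasureSpace Ω] [IsProbabilityMeasure (ℙ : Measure Ω)]
    {X Y : Ω → ℝ} (hXm : Measurable X) (hYm : Measurable Y)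
    (hindep : IndepFun X Y ℙ) (hXpos : ∀ᵐ ω ∂ℙ, 0 < X ω)
    (r : ℝ) (hr : 1 < r) (m : ℕ) (z : ℝ) (hz : 0 < z) :
    (ℙ {ω | z ≤ X ω * Y ω}).toReal ≤
      (ℙ {ω | z ≤ Y ω}).toReal + (ℙ {ω | r ^ m ≤ X ω}).toReal
      + ∑ j ∈ Finset.range m,
          (ℙ {ω | (r:ℝ) ^ j ≤ X ω}).toReal * (ℙ {ω | z / r ^ (j+1) ≤ Y ω}).toReal := by
  have hr0 : (0:ℝ) < r := lt_trans one_pos hr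
  set A : ℕ → Set Ω := fun j =>
    X ⁻¹' Set.Ico (r ^ j) (r ^ (j+1)) ∩ Y ⁻¹' Set.Ici (z / r ^ (j+1)) with hA
  set T : Set Ω := {ω | 0 < X ω} with hT
  have hkey : {ω | z ≤ X ω * Y ω} ∩ T ⊆
      (Y ⁻¹' Set.Ici z ∪ X ⁻¹' Set.Ici (r ^ m)) ∪ ⋃ j ∈ Finset.range m, A j := by
    rintro ω ⟨hzXY, hXp⟩
    have hXp : (0:ℝ) < X ω := hXp
    have hYdiv : z / X ω ≤ Y ω := by
      rw [div_le_iff₀ hXp]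
      calc z ≤ X ω * Y ω := hzXY
        _ = Y ω * X ω := mul_comm _ _
    by_cases hX1 : X ω < 1
    · left; left
      have : z < z / X ω := by
        rw [lt_div_iff₀ hXp]
        nlinarith
      exact le_of_lt (lt_of_lt_of_le this hYdiv)
    push_neg at hX1
    by_cases hXm' : r ^ m ≤ X ω
    · left; right; exact hXm'
    push_neg at hXm'
    right
    set j := ⌊Real.log (X ω) / Real.log r⌋₊ with hj
    have hlr : 0 < Real.log r := Real.log_pos hr
    have hlX : 0 ≤ Real.log (X ω) := Real.log_nonneg hX1
    have hXrpow : X ω = r ^ (Real.logb r (X ω)) := (Real.rpow_logb hr0 (ne_of_gt hr) (lt_of_lt_of_le one_pos hX1)).symm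
    have hjle : (j : ℝ) ≤ Real.logb r (X ω) := Nat.floor_le (by positivity)
    have hjlt : Real.logb r (X ω) < (j : ℝ) + 1 := Nat.lt_floor_add_one _
    have h1 : r ^ j ≤ X ω := by
      rw [hXrpow, ← Real.rpow_natCast r j]
      exact (Real.rpow_le_rpow_left_iff hr).2 hjle
    have h2 : X ω < r ^ (j+1) := by
      rw [hXrpow, ← Real.rpow_natCast r (j+1)]
      apply (Real.rpow_lt_rpow_left_iff hr).2
      push_cast
      exact hjlt
    have hjm : j < m := by
      have : (r:ℝ) ^ j < r ^ m := lt_of_le_of_lt h1 hXm'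
      exact (pow_lt_pow_iff_right₀ hr).1 this
    have hY : z / r ^ (j+1) ≤ Y ω := by
      refine le_trans (le_of_lt ?_) hYdiv
      exact div_lt_div_of_pos_left hz hXp h2
    exact Set.mem_biUnion (Finset.mem_range.2 hjm) ⟨⟨h1, h2⟩, hY⟩
  have hTc : ℙ Tᶜ = 0 := by
    rw [hT]
    exact (ae_iff.1 hXpos)
  have step1 : ℙ {ω | z ≤ X ω * Y ω} ≤ ℙ ({ω | z ≤ X ω * Y ω} ∩ T) := by
    calc ℙ {ω | z ≤ X ω * Y ω} ≤ ℙ (({ω | z ≤ X ω * Y ω} ∩ T) ∪ Tᶜ) :=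
        measure_mono (fun ω h => by
          by_cases hω : ω ∈ T
          · exact Or.inl ⟨h, hω⟩
          · exact Or.inr hω)
      _ ≤ ℙ ({ω | z ≤ X ω * Y ω} ∩ T) + ℙ Tᶜ := measure_union_le _ _
      _ = ℙ ({ω | z ≤ X ω * Y ω} ∩ T) := by rw [hTc, add_zero]
  have step2 : ℙ ({ω | z ≤ X ω * Y ω} ∩ T) ≤
      ℙ (Y ⁻¹' Set.Ici z) + ℙ (X ⁻¹' Set.Ici (r ^ m))
      + ∑ j ∈ Finset.range m, ℙ {ω | (r:ℝ) ^ j ≤ X ω} * ℙ {ω | z / r ^ (j+1) ≤ Y ω} := by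
    calc ℙ ({ω | z ≤ X ω * Y ω} ∩ T)
        ≤ ℙ ((Y ⁻¹' Set.Ici z ∪ X ⁻¹' Set.Ici (r ^ m)) ∪ ⋃ j ∈ Finset.range m, A j) :=
          measure_mono hkey
      _ ≤ ℙ (Y ⁻¹' Set.Ici z ∪ X ⁻¹' Set.Ici (r ^ m)) + ℙ (⋃ j ∈ Finset.range m, A j) :=
          measure_union_le _ _
      _ ≤ (ℙ (Y ⁻¹' Set.Ici z) + ℙ (X ⁻¹' Set.Ici (r ^ m))) + ℙ (⋃ j ∈ Finset.range m, A j) := by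
          exact add_le_add_left (measure_union_le _ _) _
      _ ≤ (ℙ (Y ⁻¹' Set.Ici z) + ℙ (X ⁻¹' Set.Ici (r ^ m)))
            + ∑ j ∈ Finset.range m, ℙ (A j) :=
          add_le_add_right (measure_biUnion_finset_le _ _) _
      _ ≤ ℙ (Y ⁻¹' Set.Ici z) + ℙ (X ⁻¹' Set.Ici (r ^ m))
            + ∑ j ∈ Finset.range m, ℙ {ω | (r:ℝ) ^ j ≤ X ω} * ℙ {ω | z / r ^ (j+1) ≤ Y ω} := by
          gcongr with j hjr
          rw [hA]
          rw [hindep.measure_inter_preimage_eq_mul _ _ measurableSet_Ico measurableSet_Ici]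
          exact mul_le_mul' (measure_mono (Set.preimage_mono Set.Ico_subset_Ici_self)) le_rfl
  have htot := le_trans step1 step2
  have hne : ℙ (Y ⁻¹' Set.Ici z) + ℙ (X ⁻¹' Set.Ici (r ^ m))
      + ∑ j ∈ Finset.range m, ℙ {ω | (r:ℝ) ^ j ≤ X ω} * ℙ {ω | z / r ^ (j+1) ≤ Y ω} ≠ ⊤ := by
    refine ENNReal.add_ne_top.2 ⟨ENNReal.add_ne_top.2 ⟨measure_ne_top _ _, measure_ne_top _ _⟩, ?_⟩
    refine (ENNReal.sum_lt_top.2 fun j _ => ?_).ne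
    exact ENNReal.mul_lt_top (measure_lt_top _ _) (measure_lt_top _ _)
  calc (ℙ {ω | z ≤ X ω * Y ω}).toReal ≤ (ℙ (Y ⁻¹' Set.Ici z) + ℙ (X ⁻¹' Set.Ici (r ^ m))
      + ∑ j ∈ Finset.range m, ℙ {ω | (r:ℝ) ^ j ≤ X ω} * ℙ {ω | z / r ^ (j+1) ≤ Y ω}).toReal :=
        ENNReal.toReal_mono hne htot
    _ = (ℙ {ω | z ≤ Y ω}).toReal + (ℙ {ω | r ^ m ≤ X ω}).toReal
      + ∑ j ∈ Finset.range m,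
          (ℙ {ω | (r:ℝ) ^ j ≤ X ω}).toReal * (ℙ {ω | z / r ^ (j+1) ≤ Y ω}).toReal := by
        rw [ENNReal.toReal_add (ENNReal.add_ne_top.2 ⟨measure_ne_top _ _, measure_ne_top _ _⟩)
            (by refine (ENNReal.sum_lt_top.2 fun j _ => ?_).ne
                exact ENNReal.mul_lt_top (measure_lt_top _ _) (measure_lt_top _ _)),
          ENNReal.toReal_add (measure_ne_top _ _) (measure_ne_top _ _),
          ENNReal.toReal_sum (fun j _ => (ENNReal.mul_lt_top (measure_lt_top _ _) (measure_lt_top _ _)).ne)]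
        simp only [ENNReal.toReal_mul]
        rfl

lemma rpow_div_neg {z t ν : ℝ} (hz : 0 < z) (ht : 0 < t) :
    (z / t) ^ (-ν) = z ^ (-ν) * t ^ ν := by
  rw [Real.div_rpow hz.le ht.le, Real.rpow_neg ht.le, div_eq_mul_inv, inv_inv]

lemma aux_le1 {a b : ℝ} (ha : 0 < a) (hb : 0 < b) : b ≤ (a + 1) * (b + 1) := by nlinarith

lemma aux_le2 {a b : ℝ} (ha : 0 < a) (hb : 0 < b) : a ≤ (a + 1) * (b + 1) := by nlinarith

lemma aux_le3 {a b : ℝ} (ha : 0 < a) (hb : 0 < b) : a * b ≤ (a + 1) * (b + 1) := by nlinarith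

lemma rpow_neg_mul_self {t ν : ℝ} (ht : 0 < t) : t ^ (-ν) * t ^ ν = 1 := by
  rw [Real.rpow_neg ht.le]; exact inv_mul_cancel₀ (Real.rpow_pos_of_pos ht ν).ne'

set_option maxHeartbeats 2000000 in
lemma analytic (ν : ℝ) (hν : 0 < ν) (n p : ℕ) (κ₁ κ₂ l₁ l₂ a₀ b₀ : ℝ)
    (hκ₁ : 0 < κ₁) (hκ : κ₁ ≤ κ₂) (hl₁ : 0 < l₁) (hl : l₁ ≤ l₂)
    (F G H : ℝ → ℝ)
    (hFanti : ∀ a b : ℝ, a ≤ b → F b ≤ F a)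
    (hF1 : ∀ t, F t ≤ 1) (hG1 : ∀ t, G t ≤ 1)
    (hF0 : ∀ t, 0 ≤ F t) (hG0 : ∀ t, 0 ≤ G t)
    (hFb : ∀ z : ℝ, a₀ ≤ z → κ₁ * (z ^ (-ν) * Real.log z ^ n) ≤ F z ∧
       F z ≤ κ₂ * (z ^ (-ν) * Real.log z ^ n))
    (hGb : ∀ z : ℝ, b₀ ≤ z → l₁ * (z ^ (-ν) * Real.log z ^ p) ≤ G z ∧
       G z ≤ l₂ * (z ^ (-ν) * Real.log z ^ p))
    (hlow : ∀ s : ℕ → ℝ, Monotone s → 0 < s 0 → ∀ m : ℕ, ∀ z : ℝ, 0 ≤ z →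
      ∑ j ∈ Finset.range m, (F (s j) - F (s (j+1))) * G (z / s j) ≤ H z)
    (hup : ∀ r : ℝ, 1 < r → ∀ m : ℕ, ∀ z : ℝ, 0 < z →
      H z ≤ G z + F (r ^ m) + ∑ j ∈ Finset.range m, F (r ^ j) * G (z / r ^ (j+1))) :
    AsympAtTop (fun z => z ^ (-ν) * Real.log z ^ (n + p + 1)) H := by
  have hκ₂ : 0 < κ₂ := lt_of_lt_of_le hκ₁ hκ
  have hl₂ : 0 < l₂ := lt_of_lt_of_le hl₁ hl
  -- the ratio r
  set r : ℝ := max (Real.exp 1) ((2 ^ (n+1) * κ₂ / κ₁) ^ (ν⁻¹)) with hrdef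
  have hre : Real.exp 1 ≤ r := le_max_left _ _
  have hr1 : 1 < r := lt_of_lt_of_le (by
    have := Real.add_one_le_exp (1:ℝ); linarith) hre
  have hr0 : (0:ℝ) < r := lt_trans one_pos hr1
  have hlr1 : 1 ≤ Real.log r := by
    calc (1:ℝ) = Real.log (Real.exp 1) := (Real.log_exp 1).symm
      _ ≤ Real.log r := Real.log_le_log (Real.exp_pos 1) hre
  have hlr0 : 0 < Real.log r := lt_of_lt_of_le one_pos hlr1
  have hrν : 2 ^ (n+1) * κ₂ / κ₁ ≤ r ^ ν := by
    have hbase : (0:ℝ) ≤ 2 ^ (n+1) * κ₂ / κ₁ := by positivity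
    calc 2 ^ (n+1) * κ₂ / κ₁ = ((2 ^ (n+1) * κ₂ / κ₁) ^ (ν⁻¹)) ^ ν := by
          rw [← Real.rpow_mul hbase, inv_mul_cancel₀ hν.ne', Real.rpow_one]
      _ ≤ r ^ ν := Real.rpow_le_rpow (Real.rpow_nonneg hbase _) (le_max_right _ _) hν.le
  -- the key smallness fact
  have hsmall : κ₂ * r ^ (-ν) * 2 ^ n ≤ κ₁ / 2 := by
    have hrνpos : (0:ℝ) < r ^ ν := Real.rpow_pos_of_pos hr0 ν
    have h1 : r ^ (-ν) = (r ^ ν)⁻¹ := Real.rpow_neg hr0.le ν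
    have h2 : (r ^ ν)⁻¹ ≤ (2 ^ (n+1) * κ₂ / κ₁)⁻¹ := by
      apply inv_anti₀ (by positivity) hrν
    rw [h1]
    have h3 : (2 ^ (n+1) * κ₂ / κ₁)⁻¹ = κ₁ / (2 ^ (n+1) * κ₂) := by
      field_simp
    rw [h3] at h2
    have h4 : κ₂ * (κ₁ / (2 ^ (n+1) * κ₂)) * 2 ^ n = κ₁ / 2 := by
      field_simp
      ring
    calc κ₂ * (r ^ ν)⁻¹ * 2 ^ n ≤ κ₂ * (κ₁ / (2 ^ (n+1) * κ₂)) * 2 ^ n := by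
          apply mul_le_mul_of_nonneg_right (mul_le_mul_of_nonneg_left h2 hκ₂.le) (by positivity)
      _ = κ₁ / 2 := h4
  set Z₀ : ℝ := max (max a₀ b₀) (max r (Real.exp 1)) with hZdef
  have hZr : r ≤ Z₀ := le_trans (le_max_left _ _) (le_max_right _ _)
  have hZe : Real.exp 1 ≤ Z₀ := le_trans (le_max_right _ _) (le_max_right _ _)
  have hZa : a₀ ≤ Z₀ := le_trans (le_max_left _ _) (le_max_left _ _)
  have hZb : b₀ ≤ Z₀ := le_trans (le_max_right _ _) (le_max_left _ _)
  have hZ1 : 1 ≤ Z₀ := le_trans hr1.le hZr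
  have hZ0 : (0:ℝ) < Z₀ := lt_of_lt_of_le one_pos hZ1
  have hlZ1 : 1 ≤ Real.log Z₀ := by
    calc (1:ℝ) = Real.log (Real.exp 1) := (Real.log_exp 1).symm
      _ ≤ Real.log Z₀ := Real.log_le_log (Real.exp_pos 1) hZe
  have hrZ0 : (0:ℝ) < r * Z₀ := by positivity
  have hrZ1 : 1 ≤ r * Z₀ := one_le_mul_of_one_le_of_one_le hr1.le hZ1
  have hlrZ : Real.log (r * Z₀) = Real.log r + Real.log Z₀ := Real.log_mul hr0.ne' hZ0.ne'
  have hlrZ2 : 2 ≤ Real.log (r * Z₀) := by rw [hlrZ]; linarith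
  set B : ℝ := (κ₂ + 1) * (l₂ + 1) * (r * Z₀) ^ ν with hBdef
  have hrZν1 : 1 ≤ (r * Z₀) ^ ν := Real.one_le_rpow hrZ1 hν.le
  have hB0 : 0 < B := by positivity
  set K₂ : ℝ := l₂ + κ₂ + 2 * B with hK₂def
  have hK₂0 : 0 < K₂ := by positivity
  set K₁' : ℝ := κ₁ * l₁ / (8 * 4 ^ (n + p) * Real.log r) with hK₁'def
  have hK₁'0 : 0 < K₁' := by positivity
  set K₁ : ℝ := min K₁' K₂ with hK₁def
  refine ⟨K₁, K₂, (r * Z₀) ^ (16:ℕ), lt_min hK₁'0 hK₂0, min_le_right _ _, by positivity, ?_⟩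
  intro z hz
  set w : ℝ := Real.log z with hwdef
  have hz0 : (0:ℝ) < z := lt_of_lt_of_le (by positivity) hz
  have hz1 : (1:ℝ) < z := lt_of_lt_of_le (by
      calc (1:ℝ) < r * Z₀ := lt_of_lt_of_le hr1 (le_mul_of_one_le_right hr0.le hZ1)
        _ ≤ (r * Z₀) ^ (16:ℕ) := le_self_pow₀ hrZ1 (by norm_num)) hz
  have hw16 : 16 * Real.log (r * Z₀) ≤ w := by
    calc 16 * Real.log (r * Z₀) = Real.log ((r * Z₀) ^ (16:ℕ)) := by
          rw [Real.log_pow]; push_cast; ring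
      _ ≤ w := Real.log_le_log (by positivity) hz
  have hw32 : 32 ≤ w := le_trans (by linarith) hw16
  have hw1 : 1 ≤ w := by linarith
  have hw0 : 0 < w := by linarith
  have hwlr : 16 * Real.log r ≤ w := by
    have : Real.log r ≤ Real.log (r * Z₀) := by rw [hlrZ]; linarith
    linarith
  have hwlZ : 16 * Real.log Z₀ ≤ w := by
    have : Real.log Z₀ ≤ Real.log (r * Z₀) := by rw [hlrZ]; linarith
    linarith
  have hzν : (0:ℝ) < z ^ (-ν) := Real.rpow_pos_of_pos hz0 _
  have hrpow_exp : ∀ k : ℕ, r ^ k = Real.exp (k * Real.log r) := fun k => by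
    rw [Real.exp_nat_mul, Real.exp_log hr0]
  have hexpw : Real.exp w = z := Real.exp_log hz0
  have hZz : Z₀ ≤ z := by
    calc Z₀ ≤ r * Z₀ := le_mul_of_one_le_left hZ0.le hr1.le
      _ ≤ (r * Z₀) ^ (16:ℕ) := le_self_pow₀ hrZ1 (by norm_num)
      _ ≤ z := hz
  have hwp1 : w ^ p ≤ w ^ (n + p + 1) := pow_le_pow_right₀ hw1 (by omega)
  have hwn1 : w ^ n ≤ w ^ (n + p + 1) := pow_le_pow_right₀ hw1 (by omega)
  have hwnp0 : (0:ℝ) < w ^ (n + p) := pow_pos hw0 _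
  have hzbig2 : r * Z₀ * Z₀ ≤ z := by
    have h1 : (r * Z₀) ^ (2:ℕ) ≤ (r * Z₀) ^ (16:ℕ) := pow_le_pow_right₀ hrZ1 (by norm_num)
    have hZrZ : Z₀ ≤ r * Z₀ := le_mul_of_one_le_left hZ0.le hr1.le
    have h2 : r * Z₀ * Z₀ ≤ (r * Z₀) ^ (2:ℕ) := by
      calc r * Z₀ * Z₀ ≤ r * Z₀ * (r * Z₀) := mul_le_mul_of_nonneg_left hZrZ hrZ0.le
        _ = (r * Z₀) ^ (2:ℕ) := by ring
    linarith only [h1, h2, hz]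
  have hrrZ : r ^ ν ≤ (r * Z₀) ^ ν :=
    Real.rpow_le_rpow hr0.le (le_mul_of_one_le_right hr0.le hZ1) hν.le
  constructor
  · -- LOWER BOUND
    show K₁ * (z ^ (-ν) * w ^ (n + p + 1)) ≤ H z
    set m₀ := ⌈w / (4 * Real.log r)⌉₊ with hm₀def
    have hm₀ge : w / (4 * Real.log r) ≤ (m₀:ℝ) := Nat.le_ceil _
    have hm₀le : (m₀:ℝ) ≤ w / (4 * Real.log r) + 1 := (Nat.ceil_lt_add_one (by positivity)).le
    set s : ℕ → ℝ := fun j => r ^ (m₀ + j) with hsdef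
    have hsmono : Monotone s := fun i j h => pow_le_pow_right₀ hr1.le (by omega)
    have hs0 : 0 < s 0 := pow_pos hr0 _
    have hterm : ∀ j ∈ Finset.range m₀,
        (κ₁ * l₁ / 2) * (z ^ (-ν) * (w/4) ^ (n+p)) ≤ (F (s j) - F (s (j+1))) * G (z / s j) := by
      intro j hj
      rw [Finset.mem_range] at hj
      have hu0 : (0:ℝ) < s j := pow_pos hr0 _
      have hu10 : (0:ℝ) < s (j+1) := pow_pos hr0 _
      have hu1u : s (j+1) = r * s j := by
        show r ^ (m₀ + (j+1)) = r * r ^ (m₀ + j)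
        rw [show m₀ + (j+1) = (m₀ + j) + 1 by omega, pow_succ]; ring
      have hlu : Real.log (s j) = (m₀ + j : ℕ) * Real.log r := by
        show Real.log (r ^ (m₀ + j)) = _
        rw [Real.log_pow]
      have h1 : w / 4 ≤ Real.log (s j) := by
        rw [hlu]
        have : (m₀:ℝ) ≤ ((m₀ + j : ℕ):ℝ) := by push_cast; linarith [Nat.cast_nonneg (α := ℝ) j]
        calc w / 4 = (w / (4 * Real.log r)) * Real.log r := by field_simp
          _ ≤ (m₀:ℝ) * Real.log r := mul_le_mul_of_nonneg_right hm₀ge hlr0.le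
          _ ≤ ((m₀ + j : ℕ):ℝ) * Real.log r := mul_le_mul_of_nonneg_right this hlr0.le
      have h2 : Real.log (s j) ≤ w / 2 + Real.log r := by
        rw [hlu]
        have hjm : ((m₀ + j : ℕ):ℝ) ≤ 2 * (m₀:ℝ) - 1 := by
          have : (j:ℝ) ≤ (m₀:ℝ) - 1 := by
            have := (Nat.cast_le (α := ℝ)).2 (Nat.succ_le_of_lt hj)
            push_cast at this; linarith
          push_cast; linarith
        calc ((m₀ + j : ℕ):ℝ) * Real.log r ≤ (2 * (m₀:ℝ) - 1) * Real.log r :=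
              mul_le_mul_of_nonneg_right hjm hlr0.le
          _ ≤ (2 * (w / (4 * Real.log r) + 1) - 1) * Real.log r := by
              apply mul_le_mul_of_nonneg_right _ hlr0.le
              linarith only [hm₀le]
          _ = w / 2 + Real.log r := by field_simp; ring
      have h3 : w / 4 ≤ Real.log (z / s j) := by
        rw [Real.log_div hz0.ne' hu0.ne']
        have : Real.log r ≤ w / 16 := by linarith only [hwlr]
        linarith only [h2, this, hw0]
      have hZu : Z₀ ≤ s j := by
        have hc : Real.log Z₀ ≤ Real.log (s j) := by
          have : Real.log Z₀ ≤ w / 16 := by linarith only [hwlZ]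
          linarith only [this, h1, hw0]
        have := Real.exp_le_exp.2 hc
        rwa [Real.exp_log hZ0, Real.exp_log hu0] at this
      have hzu0 : (0:ℝ) < z / s j := by positivity
      have hZzu : Z₀ ≤ z / s j := by
        have hc : Real.log Z₀ ≤ Real.log (z / s j) := by
          have : Real.log Z₀ ≤ w / 16 := by linarith only [hwlZ]
          linarith only [this, h3, hw0]
        have := Real.exp_le_exp.2 hc
        rwa [Real.exp_log hZ0, Real.exp_log hzu0] at this
      have hlu0 : 0 < Real.log (s j) := lt_of_lt_of_le (by linarith only [hw0]) h1
      have hlzu0 : 0 < Real.log (z / s j) := lt_of_lt_of_le (by linarith only [hw0]) h3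
      have hFu := (hFb (s j) (hZa.trans hZu)).1
      have hFu1 := (hFb (s (j+1)) (le_trans (hZa.trans hZu) (by
        rw [hu1u]; exact le_mul_of_one_le_left hu0.le hr1.le))).2
      have hGu := (hGb (z / s j) (hZb.trans hZzu)).1
      -- bound F (s (j+1)) above by (κ₁/2) * (s j ^ (-ν) * log (s j) ^ n)
      have hlu1 : Real.log (s (j+1)) = Real.log r + Real.log (s j) := by
        rw [hu1u, Real.log_mul hr0.ne' hu0.ne']
      have hlu1le : Real.log (s (j+1)) ≤ 2 * Real.log (s j) := by
        rw [hlu1]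
        have : Real.log r ≤ w / 16 := by linarith only [hwlr]
        linarith only [this, h1, hw0]
      have hlu10 : 0 ≤ Real.log (s (j+1)) := by
        rw [hlu1]; linarith only [hlr0.le, hlu0.le]
      have hu1rpow : (s (j+1)) ^ (-ν) = r ^ (-ν) * (s j) ^ (-ν) := by
        rw [hu1u, Real.mul_rpow hr0.le hu0.le]
      have hstep : F (s (j+1)) ≤ (κ₁ / 2) * ((s j) ^ (-ν) * Real.log (s j) ^ n) := by
        calc F (s (j+1)) ≤ κ₂ * ((s (j+1)) ^ (-ν) * Real.log (s (j+1)) ^ n) := hFu1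
          _ ≤ κ₂ * ((r ^ (-ν) * (s j) ^ (-ν)) * (2 * Real.log (s j)) ^ n) := by
              rw [hu1rpow]
              apply mul_le_mul_of_nonneg_left _ hκ₂.le
              apply mul_le_mul_of_nonneg_left _ (by positivity)
              exact pow_le_pow_left₀ hlu10 hlu1le n
          _ = (κ₂ * r ^ (-ν) * 2 ^ n) * ((s j) ^ (-ν) * Real.log (s j) ^ n) := by
              rw [mul_pow]; ring
          _ ≤ (κ₁ / 2) * ((s j) ^ (-ν) * Real.log (s j) ^ n) := by
              apply mul_le_mul_of_nonneg_right hsmall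
              positivity
      have hdiff : (κ₁ / 2) * ((s j) ^ (-ν) * Real.log (s j) ^ n) ≤ F (s j) - F (s (j+1)) := by
        linarith only [hFu, hstep]
      have hprod : (s j) ^ (-ν) * (z / s j) ^ (-ν) = z ^ (-ν) := by
        rw [rpow_div_neg hz0 hu0]
        calc (s j) ^ (-ν) * (z ^ (-ν) * (s j) ^ ν)
            = z ^ (-ν) * ((s j) ^ (-ν) * (s j) ^ ν) := by ring
          _ = z ^ (-ν) := by rw [rpow_neg_mul_self hu0, mul_one]
      have hGnonneg : 0 ≤ l₁ * ((z / s j) ^ (-ν) * Real.log (z / s j) ^ p) := by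
        have := Real.rpow_nonneg hzu0.le (-ν)
        positivity
      calc (κ₁ * l₁ / 2) * (z ^ (-ν) * (w/4) ^ (n+p))
          = (κ₁ / 2) * l₁ * (z ^ (-ν) * ((w/4) ^ n * (w/4) ^ p)) := by
            rw [← pow_add]; ring
        _ ≤ (κ₁ / 2) * l₁ * (z ^ (-ν) * (Real.log (s j) ^ n * Real.log (z / s j) ^ p)) := by
            apply mul_le_mul_of_nonneg_left _ (by positivity)
            apply mul_le_mul_of_nonneg_left _ hzν.le
            exact mul_le_mul (pow_le_pow_left₀ (by positivity) h1 n)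
              (pow_le_pow_left₀ (by positivity) h3 p)
              (by positivity) (pow_nonneg hlu0.le n)
        _ = (κ₁ / 2) * l₁ * (((s j) ^ (-ν) * (z / s j) ^ (-ν))
              * (Real.log (s j) ^ n * Real.log (z / s j) ^ p)) := by rw [hprod]
        _ = ((κ₁ / 2) * ((s j) ^ (-ν) * Real.log (s j) ^ n))
              * (l₁ * ((z / s j) ^ (-ν) * Real.log (z / s j) ^ p)) := by ring
        _ ≤ (F (s j) - F (s (j+1))) * G (z / s j) :=
            mul_le_mul hdiff hGu hGnonneg (le_trans (by positivity) hdiff)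
    have hsum : (m₀:ℝ) * ((κ₁ * l₁ / 2) * (z ^ (-ν) * (w/4) ^ (n+p)))
        ≤ ∑ j ∈ Finset.range m₀, (F (s j) - F (s (j+1))) * G (z / s j) := by
      have h := Finset.card_nsmul_le_sum (Finset.range m₀) _ _ hterm
      rw [Finset.card_range, nsmul_eq_mul] at h
      exact h
    calc K₁ * (z ^ (-ν) * w ^ (n + p + 1))
        ≤ K₁' * (z ^ (-ν) * w ^ (n + p + 1)) :=
          mul_le_mul_of_nonneg_right (min_le_left _ _) (by positivity)
      _ = (w / (4 * Real.log r)) * ((κ₁ * l₁ / 2) * (z ^ (-ν) * (w/4) ^ (n+p))) := by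
          rw [hK₁'def, div_pow, pow_succ]
          field_simp
          ring
      _ ≤ (m₀:ℝ) * ((κ₁ * l₁ / 2) * (z ^ (-ν) * (w/4) ^ (n+p))) :=
          mul_le_mul_of_nonneg_right hm₀ge (by positivity)
      _ ≤ ∑ j ∈ Finset.range m₀, (F (s j) - F (s (j+1))) * G (z / s j) := hsum
      _ ≤ H z := hlow s hsmono hs0 m₀ z hz0.le
  · -- UPPER BOUND
    show H z ≤ K₂ * (z ^ (-ν) * w ^ (n + p + 1))
    set m := ⌈w / Real.log r⌉₊ with hmdef
    have hm_le : (m:ℝ) ≤ w / Real.log r + 1 := (Nat.ceil_lt_add_one (by positivity)).le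
    have hm_ge : w / Real.log r ≤ (m:ℝ) := Nat.le_ceil _
    have hm2w : (m:ℝ) ≤ 2 * w := by
      have : w / Real.log r ≤ w := div_le_self hw0.le hlr1
      linarith
    have hrm : z ≤ r ^ m := by
      rw [hrpow_exp m, ← hexpw]
      apply Real.exp_le_exp.2
      calc w = (w / Real.log r) * Real.log r := by field_simp
        _ ≤ m * Real.log r := mul_le_mul_of_nonneg_right hm_ge hlr0.le
    have hterm : ∀ j ∈ Finset.range m,
        F (r ^ j) * G (z / r ^ (j+1)) ≤ B * (z ^ (-ν) * w ^ (n + p)) := by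
      intro j hj
      rw [Finset.mem_range] at hj
      have ht0 : (0:ℝ) < r ^ j := pow_pos hr0 j
      have ht1 : (1:ℝ) ≤ r ^ j := one_le_pow₀ hr1.le
      have htz : (r:ℝ) ^ j < z := by
        rw [hrpow_exp j, ← hexpw]
        apply Real.exp_lt_exp.2
        have hjw : (j:ℝ) < w / Real.log r := Nat.lt_ceil.1 hj
        calc (j:ℝ) * Real.log r < (w / Real.log r) * Real.log r :=
              mul_lt_mul_of_pos_right hjw hlr0
          _ = w := by field_simp
      have hlt : Real.log (r ^ j) = j * Real.log r := by
        rw [Real.log_pow]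
      have hlt0 : 0 ≤ Real.log (r ^ j) := Real.log_nonneg ht1
      have hltw : Real.log (r ^ j) ≤ w := (Real.log_lt_log ht0 htz).le
      have ht1t : (r:ℝ) ^ (j+1) = r * r ^ j := by rw [pow_succ]; ring
      have ht10 : (0:ℝ) < r ^ (j+1) := pow_pos hr0 _
      have ht11 : (1:ℝ) ≤ r ^ (j+1) := one_le_pow₀ hr1.le
      have hzt1 : (0:ℝ) < z / r ^ (j+1) := by positivity
      have hlzt1w : Real.log (z / r ^ (j+1)) ≤ w := by
        rw [Real.log_div hz0.ne' ht10.ne']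
        have h0 : 0 ≤ Real.log (r ^ (j+1)) := Real.log_nonneg ht11
        linarith
      by_cases hcb : r ^ j < Z₀
      · -- case b : t small
        have ht1rZ : (r:ℝ) ^ (j+1) ≤ r * Z₀ := by
          rw [ht1t]; exact mul_le_mul_of_nonneg_left hcb.le hr0.le
        have hzt1Z : Z₀ ≤ z / r ^ (j+1) := by
          rw [le_div_iff₀ ht10]
          calc Z₀ * r ^ (j+1) ≤ Z₀ * (r * Z₀) := mul_le_mul_of_nonneg_left ht1rZ hZ0.le
            _ = r * Z₀ * Z₀ := by ring
            _ ≤ z := hzbig2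
        have hG := (hGb _ (le_trans hZb hzt1Z)).2
        have hrw : (z / r ^ (j+1)) ^ (-ν) ≤ z ^ (-ν) * (r * Z₀) ^ ν := by
          rw [rpow_div_neg hz0 ht10]
          exact mul_le_mul_of_nonneg_left (Real.rpow_le_rpow ht10.le ht1rZ hν.le) hzν.le
        have hlz0 : 0 ≤ Real.log (z / r ^ (j+1)) := Real.log_nonneg (le_trans hZ1 hzt1Z)
        have hwp : w ^ p ≤ w ^ (n + p) := pow_le_pow_right₀ hw1 (by omega)
        calc F (r ^ j) * G (z / r ^ (j+1)) ≤ 1 * G (z / r ^ (j+1)) :=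
              mul_le_mul_of_nonneg_right (hF1 _) (hG0 _)
          _ = G (z / r ^ (j+1)) := one_mul _
          _ ≤ l₂ * ((z / r ^ (j+1)) ^ (-ν) * Real.log (z / r ^ (j+1)) ^ p) := hG
          _ ≤ l₂ * ((z ^ (-ν) * (r * Z₀) ^ ν) * w ^ p) := by
              apply mul_le_mul_of_nonneg_left _ hl₂.le
              exact mul_le_mul hrw (pow_le_pow_left₀ hlz0 hlzt1w p)
                (pow_nonneg hlz0 p) (by positivity)
          _ = (l₂ * (r * Z₀) ^ ν) * (z ^ (-ν) * w ^ p) := by ring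
          _ ≤ ((κ₂ + 1) * (l₂ + 1) * (r * Z₀) ^ ν) * (z ^ (-ν) * w ^ (n + p)) := by
              apply mul_le_mul
              · exact mul_le_mul_of_nonneg_right (aux_le1 hκ₂ hl₂) (by positivity)
              · exact mul_le_mul_of_nonneg_left hwp hzν.le
              · positivity
              · positivity
          _ = B * (z ^ (-ν) * w ^ (n + p)) := by rw [hBdef]
      push_neg at hcb
      by_cases hcc : z / r ^ (j+1) < Z₀
      · -- case c : t close to z
        have htlow : z / (r * Z₀) ≤ r ^ j := by
          rw [div_le_iff₀ hrZ0]
          rw [div_lt_iff₀ ht10] at hcc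
          calc z ≤ Z₀ * r ^ (j+1) := hcc.le
            _ = r ^ j * (r * Z₀) := by rw [ht1t]; ring
        have hzrZ0 : (0:ℝ) < z / (r * Z₀) := by positivity
        have htrpow : (r ^ j : ℝ) ^ (-ν) ≤ z ^ (-ν) * (r * Z₀) ^ ν := by
          calc (r ^ j : ℝ) ^ (-ν) ≤ (z / (r * Z₀)) ^ (-ν) :=
                Real.rpow_le_rpow_of_nonpos hzrZ0 htlow (neg_nonpos.2 hν.le)
            _ = z ^ (-ν) * (r * Z₀) ^ ν := rpow_div_neg hz0 hrZ0
        have hF := (hFb _ (le_trans hZa hcb)).2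
        have hwn : w ^ n ≤ w ^ (n + p) := pow_le_pow_right₀ hw1 (by omega)
        calc F (r ^ j) * G (z / r ^ (j+1)) ≤ F (r ^ j) * 1 :=
              mul_le_mul_of_nonneg_left (hG1 _) (hF0 _)
          _ = F (r ^ j) := mul_one _
          _ ≤ κ₂ * ((r ^ j : ℝ) ^ (-ν) * Real.log (r ^ j) ^ n) := hF
          _ ≤ κ₂ * ((z ^ (-ν) * (r * Z₀) ^ ν) * w ^ n) := by
              apply mul_le_mul_of_nonneg_left _ hκ₂.le
              exact mul_le_mul htrpow (pow_le_pow_left₀ hlt0 hltw n)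
                (pow_nonneg hlt0 n) (by positivity)
          _ = (κ₂ * (r * Z₀) ^ ν) * (z ^ (-ν) * w ^ n) := by ring
          _ ≤ ((κ₂ + 1) * (l₂ + 1) * (r * Z₀) ^ ν) * (z ^ (-ν) * w ^ (n + p)) := by
              apply mul_le_mul
              · exact mul_le_mul_of_nonneg_right (aux_le2 hκ₂ hl₂) (by positivity)
              · exact mul_le_mul_of_nonneg_left hwn hzν.le
              · positivity
              · positivity
          _ = B * (z ^ (-ν) * w ^ (n + p)) := by rw [hBdef]
      push_neg at hcc
      -- case a : middle
      have hF := (hFb _ (le_trans hZa hcb)).2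
      have hG := (hGb _ (le_trans hZb hcc)).2
      have hlz0 : 0 ≤ Real.log (z / r ^ (j+1)) := Real.log_nonneg (le_trans hZ1 hcc)
      have hprod : (r ^ j : ℝ) ^ (-ν) * (z / r ^ (j+1)) ^ (-ν) = z ^ (-ν) * r ^ ν := by
        rw [rpow_div_neg hz0 ht10, ht1t, Real.mul_rpow hr0.le ht0.le]
        calc (r ^ j : ℝ) ^ (-ν) * (z ^ (-ν) * (r ^ ν * (r ^ j : ℝ) ^ ν))
            = z ^ (-ν) * r ^ ν * ((r ^ j : ℝ) ^ (-ν) * (r ^ j : ℝ) ^ ν) := by ring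
          _ = z ^ (-ν) * r ^ ν := by rw [rpow_neg_mul_self ht0, mul_one]
      calc F (r ^ j) * G (z / r ^ (j+1))
          ≤ (κ₂ * ((r ^ j : ℝ) ^ (-ν) * Real.log (r ^ j) ^ n))
            * (l₂ * ((z / r ^ (j+1)) ^ (-ν) * Real.log (z / r ^ (j+1)) ^ p)) :=
            mul_le_mul hF hG (hG0 _) (by positivity)
        _ = (κ₂ * l₂) * (((r ^ j : ℝ) ^ (-ν) * (z / r ^ (j+1)) ^ (-ν))
              * (Real.log (r ^ j) ^ n * Real.log (z / r ^ (j+1)) ^ p)) := by ring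
        _ = (κ₂ * l₂) * ((z ^ (-ν) * r ^ ν)
              * (Real.log (r ^ j) ^ n * Real.log (z / r ^ (j+1)) ^ p)) := by rw [hprod]
        _ ≤ (κ₂ * l₂) * ((z ^ (-ν) * r ^ ν) * (w ^ n * w ^ p)) := by
            apply mul_le_mul_of_nonneg_left _ (by positivity)
            apply mul_le_mul_of_nonneg_left _ (by positivity)
            exact mul_le_mul (pow_le_pow_left₀ hlt0 hltw n) (pow_le_pow_left₀ hlz0 hlzt1w p)
              (pow_nonneg hlz0 p) (pow_nonneg (by linarith) n)
        _ = (κ₂ * l₂ * r ^ ν) * (z ^ (-ν) * w ^ (n + p)) := by rw [← pow_add]; ring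
        _ ≤ ((κ₂ + 1) * (l₂ + 1) * (r * Z₀) ^ ν) * (z ^ (-ν) * w ^ (n + p)) := by
            apply mul_le_mul _ le_rfl (by positivity) (by positivity)
            calc κ₂ * l₂ * r ^ ν ≤ κ₂ * l₂ * (r * Z₀) ^ ν :=
                  mul_le_mul_of_nonneg_left hrrZ (by positivity)
              _ ≤ (κ₂ + 1) * (l₂ + 1) * (r * Z₀) ^ ν :=
                  mul_le_mul_of_nonneg_right (aux_le3 hκ₂ hl₂) (by positivity)
        _ = B * (z ^ (-ν) * w ^ (n + p)) := by rw [hBdef]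
    have hsum : ∑ j ∈ Finset.range m, F (r ^ j) * G (z / r ^ (j+1))
        ≤ 2 * B * (z ^ (-ν) * w ^ (n + p + 1)) := by
      calc ∑ j ∈ Finset.range m, F (r ^ j) * G (z / r ^ (j+1))
          ≤ (Finset.range m).card • (B * (z ^ (-ν) * w ^ (n + p))) :=
            Finset.sum_le_card_nsmul _ _ _ hterm
        _ = (m:ℝ) * (B * (z ^ (-ν) * w ^ (n + p))) := by
            rw [Finset.card_range, nsmul_eq_mul]
        _ ≤ (2 * w) * (B * (z ^ (-ν) * w ^ (n + p))) :=
            mul_le_mul_of_nonneg_right hm2w (by positivity)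
        _ = 2 * B * (z ^ (-ν) * w ^ (n + p + 1)) := by rw [pow_succ]; ring
    have hGz : G z ≤ l₂ * (z ^ (-ν) * w ^ (n + p + 1)) := by
      calc G z ≤ l₂ * (z ^ (-ν) * w ^ p) := (hGb z (hZb.trans hZz)).2
        _ ≤ l₂ * (z ^ (-ν) * w ^ (n + p + 1)) := by
            apply mul_le_mul_of_nonneg_left _ hl₂.le
            exact mul_le_mul_of_nonneg_left hwp1 hzν.le
    have hFz : F (r ^ m) ≤ κ₂ * (z ^ (-ν) * w ^ (n + p + 1)) := by
      calc F (r ^ m) ≤ F z := hFanti z (r ^ m) hrm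
        _ ≤ κ₂ * (z ^ (-ν) * w ^ n) := (hFb z (hZa.trans hZz)).2
        _ ≤ κ₂ * (z ^ (-ν) * w ^ (n + p + 1)) := by
            apply mul_le_mul_of_nonneg_left _ hκ₂.le
            exact mul_le_mul_of_nonneg_left hwn1 hzν.le
    have htot := hup r hr1 m z hz0
    rw [hK₂def]
    linarith only [htot, hGz, hFz, hsum]


theorem stmt_0 {Ω : Type*} [MeasureSpace Ω] [IsProbabilityMeasure (ℙ : Measure Ω)]
    (ν : ℝ) (hν : 0 < ν) (n p : ℕ) (X Y : Ω → ℝ)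
    (hXm : Measurable X) (hYm : Measurable Y)
    (hXpos : ∀ᵐ ω ∂ℙ, 0 < X ω) (hYpos : ∀ᵐ ω ∂ℙ, 0 < Y ω)
    (hindep : IndepFun X Y ℙ)
    (htX : AsympAtTop (fun z => z ^ (-ν) * Real.log z ^ n)
      (fun z => (ℙ {ω | z ≤ X ω}).toReal))
    (htY : AsympAtTop (fun z => z ^ (-ν) * Real.log z ^ p)
      (fun z => (ℙ {ω | z ≤ Y ω}).toReal)) :
    AsympAtTop (fun z => z ^ (-ν) * Real.log z ^ (n + p + 1))
      (fun z => (ℙ {ω | z ≤ X ω * Y ω}).toReal) := by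
  obtain ⟨κ₁, κ₂, a₀, hκ₁, hκ, ha₀, hX⟩ := htX
  obtain ⟨l₁, l₂, b₀, hl₁, hl, hb₀, hY⟩ := htY
  refine analytic ν hν n p κ₁ κ₂ l₁ l₂ a₀ b₀ hκ₁ hκ hl₁ hl
    (fun t => (ℙ {ω | t ≤ X ω}).toReal) (fun t => (ℙ {ω | t ≤ Y ω}).toReal)
    (fun z => (ℙ {ω | z ≤ X ω * Y ω}).toReal)
    ?_ ?_ ?_ ?_ ?_ ?_ ?_ ?_ ?_
  · intro a b hab
    exact ENNReal.toReal_mono (measure_ne_top _ _)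
      (measure_mono (fun ω h => le_trans hab h))
  · intro t
    simpa using ENNReal.toReal_mono ENNReal.one_ne_top prob_le_one
  · intro t
    simpa using ENNReal.toReal_mono ENNReal.one_ne_top prob_le_one
  · intro t; exact ENNReal.toReal_nonneg
  · intro t; exact ENNReal.toReal_nonneg
  · exact fun z hz => hX z hz
  · exact fun z hz => hY z hz
  · exact fun s hs hs0 m z hz => prob_lower hXm hYm hindep s hs hs0 m z hz
  · exact fun r hr m z hz => prob_upper hXm hYm hindep hXpos r hr m z hz
end

section
/- Let μ > ν > 0 and n, p ∈ ℕ. Let X and Y be two independent positive random variables on a probability space such that P[X ≥ z] ≍ z^{-ν} (log z)^n as z → ∞ and P[Y ≥ z] ≍ z^{-μ} (log z)^p as z → ∞. Then P[X·Y ≥ z] ≍ z^{-ν} (log z)^n as z → ∞. -/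
open MeasureTheory ProbabilityTheory Real

open Filter

lemma log_pow_ev (p : ℕ) {ε : ℝ} (hε : 0 < ε) :
    ∀ᶠ z in atTop, Real.log z ^ p ≤ z ^ ε := by
  have h := (isLittleO_log_rpow_rpow_atTop (p : ℝ) hε).bound one_pos
  filter_upwards [h, eventually_ge_atTop (Real.exp 1)] with z hz hze
  have hz1 : (1:ℝ) ≤ z := le_trans (by
    have := Real.add_one_le_exp (1:ℝ); linarith) hze
  have hlog : (1:ℝ) ≤ Real.log z := by
    rw [show (1:ℝ) = Real.log (Real.exp 1) by simp]
    exact Real.log_le_log (Real.exp_pos 1) hze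
  have h0 : (0:ℝ) ≤ Real.log z := by linarith
  have : Real.log z ^ (p:ℝ) ≤ z ^ ε := by
    have hxε : (0:ℝ) ≤ z ^ ε := Real.rpow_nonneg (by linarith) _
    calc Real.log z ^ (p:ℝ) = ‖Real.log z ^ (p:ℝ)‖ := by
          rw [Real.norm_eq_abs, abs_of_nonneg (Real.rpow_nonneg h0 _)]
      _ ≤ 1 * ‖z ^ ε‖ := hz
      _ = z ^ ε := by rw [one_mul, Real.norm_eq_abs, abs_of_nonneg hxε]
  rwa [Real.rpow_natCast] at this

lemma tail_poly {F : ℝ → ℝ} (hF : ∀ z, F z ≤ 1) {μ ν' : ℝ} (hν' : 0 < ν') (hm : ν' < μ)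
    {p : ℕ} (h : AsympAtTop (fun z => z ^ (-μ) * Real.log z ^ p) F) :
    ∃ C, 0 < C ∧ ∀ z, 1 ≤ z → F z ≤ C * z ^ (-ν') := by
  obtain ⟨κ₁, κ₂, z₀, hκ₁, hκ₁₂, hz₀, hb⟩ := h
  obtain ⟨Z₁, hZ₁⟩ := eventually_atTop.mp (log_pow_ev p (show (0:ℝ) < μ - ν' by linarith))
  set M := max (max z₀ Z₁) 1 with hM
  have hM1 : (1:ℝ) ≤ M := le_max_right _ _
  refine ⟨max κ₂ (M ^ ν'), lt_max_of_lt_left (lt_of_lt_of_le hκ₁ hκ₁₂), fun z hz => ?_⟩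
  have hz0 : (0:ℝ) < z := by linarith
  have hzν : (0:ℝ) < z ^ (-ν') := Real.rpow_pos_of_pos hz0 _
  rcases le_or_gt M z with hMz | hzM
  · have h1 := (hb z (le_trans (le_trans (le_max_left _ _) (le_max_left _ _)) hMz)).2
    have h2 := hZ₁ z (le_trans (le_trans (le_max_right _ _) (le_max_left _ _)) hMz)
    calc F z ≤ κ₂ * (z ^ (-μ) * Real.log z ^ p) := h1
      _ ≤ κ₂ * (z ^ (-μ) * z ^ (μ - ν')) := by
          refine mul_le_mul_of_nonneg_left (mul_le_mul_of_nonneg_left h2 ?_) (by linarith)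
          exact le_of_lt (Real.rpow_pos_of_pos hz0 _)
      _ = κ₂ * z ^ (-ν') := by rw [← Real.rpow_add hz0]; ring_nf
      _ ≤ max κ₂ (M ^ ν') * z ^ (-ν') :=
          mul_le_mul_of_nonneg_right (le_max_left _ _) (le_of_lt hzν)
  · have : (1:ℝ) ≤ M ^ ν' * z ^ (-ν') := by
      have h1 : z ^ ν' ≤ M ^ ν' :=
        Real.rpow_le_rpow (le_of_lt hz0) (le_of_lt hzM) (le_of_lt hν')
      have h2 : z ^ ν' * z ^ (-ν') = 1 := by
        rw [← Real.rpow_add hz0]; simp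
      nlinarith [Real.rpow_pos_of_pos hz0 ν']
    calc F z ≤ 1 := hF z
      _ ≤ M ^ ν' * z ^ (-ν') := this
      _ ≤ max κ₂ (M ^ ν') * z ^ (-ν') :=
          mul_le_mul_of_nonneg_right (le_max_right _ _) (le_of_lt hzν)

set_option maxHeartbeats 1000000 in
theorem stmt_1 {Ω : Type*} [MeasureSpace Ω] [IsProbabilityMeasure (ℙ : Measure Ω)]
    (μ ν : ℝ) (hν : 0 < ν) (hμν : ν < μ) (n p : ℕ) (X Y : Ω → ℝ)
    (hXm : Measurable X) (hYm : Measurable Y)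
    (hXpos : ∀ᵐ ω ∂ℙ, 0 < X ω) (hYpos : ∀ᵐ ω ∂ℙ, 0 < Y ω)
    (hindep : IndepFun X Y ℙ)
    (htX : AsympAtTop (fun z => z ^ (-ν) * Real.log z ^ n)
      (fun z => (ℙ {ω | z ≤ X ω}).toReal))
    (htY : AsympAtTop (fun z => z ^ (-μ) * Real.log z ^ p)
      (fun z => (ℙ {ω | z ≤ Y ω}).toReal)) :
    AsympAtTop (fun z => z ^ (-ν) * Real.log z ^ n)
      (fun z => (ℙ {ω | z ≤ X ω * Y ω}).toReal) := by
  -- parameters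
  set ν' : ℝ := (ν + μ) / 2 with hν'def
  have hνν' : ν < ν' := by simp only [hν'def]; linarith
  have hν'μ : ν' < μ := by simp only [hν'def]; linarith
  have hν'0 : 0 < ν' := by linarith
  set θ : ℝ := (ν / ν' + 1) / 2 with hθdef
  have hθ0 : 0 < θ := by
    have : 0 < ν / ν' := div_pos hν hν'0
    simp only [hθdef]; linarith
  have hθ1 : θ < 1 := by
    have : ν / ν' < 1 := (div_lt_one hν'0).mpr hνν'
    simp only [hθdef]; linarith
  have hθν : ν < θ * ν' := by
    have h1 : θ * ν' = (ν + ν') / 2 := by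
      rw [hθdef, div_mul_eq_mul_div, add_mul, div_mul_cancel₀ ν hν'0.ne', one_mul]
    rw [h1]; linarith
  set q : ℝ := (2:ℝ) ^ (ν - ν') with hqdef
  have hq0 : 0 < q := Real.rpow_pos_of_pos two_pos _
  have hq1 : q < 1 := Real.rpow_lt_one_of_one_lt_of_neg one_lt_two (by linarith)
  -- unpack htX
  obtain ⟨κ₁X, κ₂X, z₀X, hκ₁X, hκ₁₂X, hz₀X, hbX⟩ := htX
  have hκ₂X : 0 < κ₂X := lt_of_lt_of_le hκ₁X hκ₁₂X
  -- tail bound for Y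
  have hFY1 : ∀ z : ℝ, (ℙ {ω | z ≤ Y ω}).toReal ≤ 1 := by
    intro z
    have h1 : ℙ {ω | z ≤ Y ω} ≤ ℙ (Set.univ : Set Ω) :=
      measure_mono (Set.subset_univ _)
    have h2 := ENNReal.toReal_mono (measure_ne_top ℙ _) h1
    simpa using h2
  obtain ⟨CY, hCY0, hCY⟩ := tail_poly hFY1 hν'0 hν'μ htY
  -- positive probability that Y ≥ 1
  obtain ⟨κ₁Y, κ₂Y, z₀Y, hκ₁Y, hκ₁₂Y, hz₀Y, hbY⟩ := htY
  set zc : ℝ := max z₀Y (Real.exp 1) with hzc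
  have hzce : Real.exp 1 ≤ zc := le_max_right _ _
  have he1 : (1:ℝ) ≤ Real.exp 1 := by have := Real.add_one_le_exp (1:ℝ); linarith
  have hzc1 : (1:ℝ) ≤ zc := le_trans he1 hzce
  have hzc0 : (0:ℝ) < zc := by linarith
  have hlzc : (1:ℝ) ≤ Real.log zc := by
    rw [show (1:ℝ) = Real.log (Real.exp 1) by simp]
    exact Real.log_le_log (Real.exp_pos 1) hzce
  set qY : ℝ := (ℙ {ω | (1:ℝ) ≤ Y ω}).toReal with hqYdef
  have hqY0 : 0 < qY := by
    have h1 : κ₁Y * (zc ^ (-μ) * Real.log zc ^ p) ≤ (ℙ {ω | zc ≤ Y ω}).toReal :=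
      (hbY zc (le_max_left _ _)).1
    have h2 : (0:ℝ) < κ₁Y * (zc ^ (-μ) * Real.log zc ^ p) := by
      have := Real.rpow_pos_of_pos hzc0 (-μ)
      have hl : (0:ℝ) < Real.log zc ^ p := pow_pos (by linarith) p
      positivity
    have h3 : {ω | zc ≤ Y ω} ⊆ {ω | (1:ℝ) ≤ Y ω} := fun ω hω => le_trans hzc1 hω
    have h4 := ENNReal.toReal_mono (measure_ne_top ℙ _) (measure_mono h3)
    simp only [hqYdef]
    linarith
  -- independence product formula
  have hprod : ∀ a b : ℝ, ℙ ({ω | a ≤ X ω} ∩ {ω | b ≤ Y ω})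
      = ℙ {ω | a ≤ X ω} * ℙ {ω | b ≤ Y ω} :=
    fun a b => hindep.measure_inter_preimage_eq_mul (Set.Ici a) (Set.Ici b)
      measurableSet_Ici measurableSet_Ici
  -- final constants
  set Dc : ℝ := κ₂X * CY * (2:ℝ) ^ ν with hDc
  have hDc0 : 0 < Dc := by
    have := Real.rpow_pos_of_pos two_pos ν; positivity
  set κ₂f : ℝ := κ₂X + CY + Dc * (1 - q)⁻¹ with hκ₂f
  have hκ₂f0 : 0 < κ₂f := by
    have hinv : 0 < (1 - q)⁻¹ := inv_pos.mpr (by linarith)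
    positivity
  set κ₁f : ℝ := κ₁X * qY with hκ₁f
  have hκ₁f0 : 0 < κ₁f := mul_pos hκ₁X hqY0
  -- eventual conditions
  have hev : ∀ᶠ z in atTop, z₀X ≤ z ∧ Real.exp 1 ≤ z ∧
      max z₀X (Real.exp 1) ≤ z ^ (1 - θ) / 4 := by
    have h3 : Tendsto (fun z : ℝ => z ^ (1 - θ) / 4) atTop atTop :=
      (tendsto_rpow_atTop (by linarith)).atTop_div_const (by norm_num)
    filter_upwards [eventually_ge_atTop z₀X, eventually_ge_atTop (Real.exp 1),
      h3.eventually_ge_atTop (max z₀X (Real.exp 1))] with z h1 h2 h3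
    exact ⟨h1, h2, h3⟩
  obtain ⟨Z₀, hZ₀⟩ := eventually_atTop.mp hev
  refine ⟨min κ₁f κ₂f, max κ₁f κ₂f, max Z₀ 1, lt_min hκ₁f0 hκ₂f0,
    le_trans (min_le_left _ _) (le_max_left _ _), lt_of_lt_of_le one_pos (le_max_right _ _),
    fun z hz => ?_⟩
  obtain ⟨hz1, hze, hzw⟩ := hZ₀ z (le_trans (le_max_left _ _) hz)
  have hz0 : (0:ℝ) < z := lt_of_lt_of_le (Real.exp_pos 1) hze
  have hz1' : (1:ℝ) ≤ z := le_trans he1 hze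
  have hlz : (1:ℝ) ≤ Real.log z := by
    rw [show (1:ℝ) = Real.log (Real.exp 1) by simp]
    exact Real.log_le_log (Real.exp_pos 1) hze
  have hlz0 : (0:ℝ) ≤ Real.log z := by linarith
  have hfz0 : (0:ℝ) ≤ z ^ (-ν) * Real.log z ^ n := by positivity
  have hlogn1 : (1:ℝ) ≤ Real.log z ^ n := one_le_pow₀ hlz
  constructor
  · -- LOWER BOUND
    have hsub : {ω | z ≤ X ω} ∩ {ω | (1:ℝ) ≤ Y ω} ⊆ {ω | z ≤ X ω * Y ω} := by
      rintro ω ⟨h1, h2⟩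
      simp only [Set.mem_setOf_eq] at *
      nlinarith [mul_le_mul_of_nonneg_left h2 (le_trans hz0.le h1)]
    have e1 : (ℙ ({ω | z ≤ X ω} ∩ {ω | (1:ℝ) ≤ Y ω})).toReal
        = (ℙ {ω | z ≤ X ω}).toReal * qY := by
      rw [hprod z 1, ENNReal.toReal_mul]
    have e2 := ENNReal.toReal_mono (measure_ne_top ℙ _) (measure_mono hsub)
    have e3 := (hbX z hz1).1
    have e4 : κ₁X * (z ^ (-ν) * Real.log z ^ n) * qY ≤ (ℙ {ω | z ≤ X ω}).toReal * qY :=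
      mul_le_mul_of_nonneg_right e3 hqY0.le
    calc min κ₁f κ₂f * (z ^ (-ν) * Real.log z ^ n)
        ≤ κ₁f * (z ^ (-ν) * Real.log z ^ n) :=
          mul_le_mul_of_nonneg_right (min_le_left _ _) hfz0
      _ = κ₁X * (z ^ (-ν) * Real.log z ^ n) * qY := by rw [hκ₁f]; ring
      _ ≤ (ℙ {ω | z ≤ X ω}).toReal * qY := e4
      _ = (ℙ ({ω | z ≤ X ω} ∩ {ω | (1:ℝ) ≤ Y ω})).toReal := e1.symm
      _ ≤ (ℙ {ω | z ≤ X ω * Y ω}).toReal := e2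
  · -- UPPER BOUND
    set K : ℕ := ⌈Real.logb 2 (z ^ θ)⌉₊ with hK
    have hzθ1 : (1:ℝ) ≤ z ^ θ := by
      calc (1:ℝ) = 1 ^ θ := (Real.one_rpow θ).symm
        _ ≤ z ^ θ := Real.rpow_le_rpow one_pos.le hz1' hθ0.le
    have hzθ0 : (0:ℝ) < z ^ θ := by linarith
    have hlogb0 : 0 ≤ Real.logb 2 (z ^ θ) := Real.logb_nonneg one_lt_two hzθ1
    set E : ℕ → Set Ω := fun k => {ω | z / 2 ^ (k+1) ≤ X ω} ∩ {ω | (2:ℝ) ^ k ≤ Y ω} with hE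
    -- a.e. covering
    have hcov : ({ω | z ≤ X ω * Y ω} : Set Ω) ≤ᵐ[ℙ]
        ((({ω | z ≤ X ω} : Set Ω) ∪ ({ω | z ^ θ ≤ Y ω} : Set Ω))
          ∪ ⋃ k ∈ Finset.range (K+1), E k : Set Ω) := by
      filter_upwards [hXpos, hYpos] with ω hX0 hY0 hωmem
      have hω : z ≤ X ω * Y ω := hωmem
      show (z ≤ X ω ∨ z ^ θ ≤ Y ω) ∨ ω ∈ ⋃ k ∈ Finset.range (K+1), E k
      rcases le_or_gt (Y ω) 1 with hY1 | hY1
      · exact Or.inl (Or.inl (by nlinarith [mul_le_mul_of_nonneg_left hY1 hX0.le]))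
      rcases le_or_gt (z ^ θ) (Y ω) with hYt | hYt
      · exact Or.inl (Or.inr hYt)
      · refine Or.inr ?_
        set k : ℕ := ⌊Real.logb 2 (Y ω)⌋₊ with hk
        have hY0' : (0:ℝ) < Y ω := hY0
        have hlogy0 : 0 ≤ Real.logb 2 (Y ω) := Real.logb_nonneg one_lt_two hY1.le
        have hk1 : (2:ℝ) ^ (k:ℝ) ≤ Y ω := by
          conv_rhs => rw [← Real.rpow_logb two_pos (by norm_num) hY0']
          exact Real.rpow_le_rpow_of_exponent_le one_le_two (Nat.floor_le hlogy0)
        have hk2 : Y ω < (2:ℝ) ^ ((k:ℝ) + 1) := by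
          conv_lhs => rw [← Real.rpow_logb two_pos (by norm_num) hY0']
          exact Real.rpow_lt_rpow_of_exponent_lt one_lt_two (Nat.lt_floor_add_one _)
        have hkK : k ≤ K := by
          have h1 : Real.logb 2 (Y ω) ≤ Real.logb 2 (z ^ θ) :=
            Real.logb_le_logb_of_le (by norm_num) hY0' hYt.le
          have h2 : (k:ℝ) ≤ (K:ℝ) :=
            le_trans (Nat.floor_le hlogy0) (le_trans h1 (Nat.le_ceil _))
          exact_mod_cast h2
        refine Set.mem_biUnion (Finset.mem_range.mpr (Nat.lt_succ_of_le hkK)) ⟨?_, ?_⟩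
        · -- z / 2^(k+1) ≤ X ω
          simp only [Set.mem_setOf_eq]
          have hXge : z / Y ω ≤ X ω := (div_le_iff₀ hY0').mpr (by linarith [mul_comm (X ω) (Y ω)])
          have h2k : Y ω ≤ (2:ℝ) ^ (k+1) := by
            have : ((2:ℝ) ^ (k+1) : ℝ) = (2:ℝ) ^ (((k+1):ℕ):ℝ) := (Real.rpow_natCast 2 (k+1)).symm
            rw [this]; push_cast; exact hk2.le
          calc z / 2 ^ (k+1) ≤ z / Y ω :=
                div_le_div_of_nonneg_left hz0.le hY0' h2k
            _ ≤ X ω := hXge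
        · simp only [Set.mem_setOf_eq]
          have : ((2:ℝ) ^ k : ℝ) = (2:ℝ) ^ ((k:ℕ):ℝ) := (Real.rpow_natCast 2 k).symm
          rw [this]; exact hk1
    -- measure bound
    have hmeas : ℙ {ω | z ≤ X ω * Y ω} ≤
        ℙ {ω | z ≤ X ω} + ℙ {ω | z ^ θ ≤ Y ω} + ∑ k ∈ Finset.range (K+1), ℙ (E k) := by
      calc ℙ {ω | z ≤ X ω * Y ω}
          ≤ ℙ (({ω | z ≤ X ω} ∪ {ω | z ^ θ ≤ Y ω}) ∪ ⋃ k ∈ Finset.range (K+1), E k) :=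
            measure_mono_ae hcov
        _ ≤ ℙ ({ω | z ≤ X ω} ∪ {ω | z ^ θ ≤ Y ω}) + ℙ (⋃ k ∈ Finset.range (K+1), E k) :=
            measure_union_le _ _
        _ ≤ (ℙ {ω | z ≤ X ω} + ℙ {ω | z ^ θ ≤ Y ω}) + ∑ k ∈ Finset.range (K+1), ℙ (E k) :=
            add_le_add (measure_union_le _ _) (measure_biUnion_finset_le _ _)
    have htoReal : (ℙ {ω | z ≤ X ω * Y ω}).toReal ≤
        (ℙ {ω | z ≤ X ω}).toReal + (ℙ {ω | z ^ θ ≤ Y ω}).toReal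
          + ∑ k ∈ Finset.range (K+1), (ℙ (E k)).toReal := by
      have hne : ℙ {ω | z ≤ X ω} + ℙ {ω | z ^ θ ≤ Y ω}
          + ∑ k ∈ Finset.range (K+1), ℙ (E k) ≠ ⊤ := by
        refine ENNReal.add_ne_top.mpr ⟨ENNReal.add_ne_top.mpr
          ⟨measure_ne_top _ _, measure_ne_top _ _⟩, ?_⟩
        exact (ENNReal.sum_lt_top.mpr (fun k _ => measure_lt_top _ _)).ne
      have := ENNReal.toReal_mono hne hmeas
      rwa [ENNReal.toReal_add (ENNReal.add_ne_top.mpr ⟨measure_ne_top _ _, measure_ne_top _ _⟩)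
        ((ENNReal.sum_lt_top.mpr (fun k _ => measure_lt_top _ _)).ne),
        ENNReal.toReal_add (measure_ne_top _ _) (measure_ne_top _ _),
        ENNReal.toReal_sum (fun k _ => measure_ne_top _ _)] at this
    -- term 1
    have hT1 : (ℙ {ω | z ≤ X ω}).toReal ≤ κ₂X * (z ^ (-ν) * Real.log z ^ n) := (hbX z hz1).2
    -- term 2
    have hT2 : (ℙ {ω | z ^ θ ≤ Y ω}).toReal ≤ CY * (z ^ (-ν) * Real.log z ^ n) := by
      have h1 := hCY (z ^ θ) hzθ1
      have h2 : ((z:ℝ) ^ θ) ^ (-ν') = z ^ (θ * -ν') := (Real.rpow_mul hz0.le _ _).symm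
      have h3 : z ^ (θ * -ν') ≤ z ^ (-ν) :=
        Real.rpow_le_rpow_of_exponent_le hz1' (by nlinarith)
      have h4 : z ^ (-ν) ≤ z ^ (-ν) * Real.log z ^ n := by
        nlinarith [Real.rpow_pos_of_pos hz0 (-ν)]
      calc (ℙ {ω | z ^ θ ≤ Y ω}).toReal ≤ CY * ((z ^ θ) ^ (-ν')) := h1
        _ = CY * z ^ (θ * -ν') := by rw [h2]
        _ ≤ CY * (z ^ (-ν)) := mul_le_mul_of_nonneg_left h3 hCY0.le
        _ ≤ CY * (z ^ (-ν) * Real.log z ^ n) := mul_le_mul_of_nonneg_left h4 hCY0.le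
    -- term 3: individual slabs
    have hKb : ((2:ℝ)) ^ (K+1) ≤ 4 * z ^ θ := by
      have h1 : (K:ℝ) < Real.logb 2 (z ^ θ) + 1 := Nat.ceil_lt_add_one hlogb0
      have h2 : ((2:ℝ)) ^ (K+1) = (2:ℝ) ^ (((K+1):ℕ):ℝ) := (Real.rpow_natCast 2 (K+1)).symm
      rw [h2]
      have h3 : (2:ℝ) ^ (((K+1):ℕ):ℝ) ≤ (2:ℝ) ^ (Real.logb 2 (z ^ θ) + 2) := by
        apply Real.rpow_le_rpow_of_exponent_le one_le_two
        push_cast; linarith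
      calc (2:ℝ) ^ (((K+1):ℕ):ℝ) ≤ (2:ℝ) ^ (Real.logb 2 (z ^ θ) + 2) := h3
        _ = z ^ θ * (2:ℝ) ^ (2:ℝ) := by
            rw [Real.rpow_add two_pos, Real.rpow_logb two_pos (by norm_num) hzθ0]
        _ = 4 * z ^ θ := by
            rw [show ((2:ℝ) ^ (2:ℝ)) = 4 by
              rw [show (2:ℝ) = ((2:ℕ):ℝ) by norm_num, Real.rpow_natCast]; norm_num]
            ring
    have hkey : ∀ k ∈ Finset.range (K+1),
        (ℙ (E k)).toReal ≤ Dc * q ^ k * (z ^ (-ν) * Real.log z ^ n) := by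
      intro k hkmem
      have hkK : k ≤ K := Nat.lt_succ_iff.mp (Finset.mem_range.mp hkmem)
      have hEk : (ℙ (E k)).toReal
          = (ℙ {ω | z / 2 ^ (k+1) ≤ X ω}).toReal * (ℙ {ω | (2:ℝ) ^ k ≤ Y ω}).toReal := by
        have hEkeq : E k = {ω | z / 2 ^ (k+1) ≤ X ω} ∩ {ω | (2:ℝ) ^ k ≤ Y ω} := rfl
        rw [hEkeq, hprod, ENNReal.toReal_mul]
      set w : ℝ := z / 2 ^ (k+1) with hw
      have h2p : (0:ℝ) < (2:ℝ) ^ (k+1) := by positivity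
      have h2k1 : (2:ℝ) ^ (k+1) ≤ 4 * z ^ θ :=
        le_trans (pow_le_pow_right₀ one_le_two (by omega)) hKb
      have hwlb : z ^ (1-θ) / 4 ≤ w := by
        have h1 : z / (4 * z ^ θ) ≤ w :=
          div_le_div_of_nonneg_left hz0.le h2p h2k1
        have h2 : z ^ (1-θ) / 4 = z / (4 * z ^ θ) := by
          rw [Real.rpow_sub hz0, Real.rpow_one]
          field_simp
        linarith
      have hwz₀ : z₀X ≤ w := le_trans (le_trans (le_max_left _ _) hzw) hwlb
      have hwe : Real.exp 1 ≤ w := le_trans (le_trans (le_max_right _ _) hzw) hwlb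
      have hw0 : (0:ℝ) < w := lt_of_lt_of_le (Real.exp_pos 1) hwe
      have hwle : w ≤ z := by
        rw [hw]
        exact div_le_self hz0.le (one_le_pow₀ one_le_two)
      have hlw : (1:ℝ) ≤ Real.log w := by
        rw [show (1:ℝ) = Real.log (Real.exp 1) by simp]
        exact Real.log_le_log (Real.exp_pos 1) hwe
      have hlogww : Real.log w ^ n ≤ Real.log z ^ n :=
        pow_le_pow_left₀ (by linarith) (Real.log_le_log hw0 hwle) n
      -- probability bounds
      have hX' : (ℙ {ω | w ≤ X ω}).toReal ≤ κ₂X * (w ^ (-ν) * Real.log w ^ n) :=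
        (hbX w hwz₀).2
      have hY' : (ℙ {ω | (2:ℝ) ^ k ≤ Y ω}).toReal ≤ CY * ((2:ℝ) ^ k) ^ (-ν') :=
        hCY _ (one_le_pow₀ one_le_two)
      -- w^{-ν} = z^{-ν} * (2^{k+1})^ν
      have hwν : w ^ (-ν) = z ^ (-ν) * ((2:ℝ) ^ (k+1)) ^ ν := by
        rw [hw, Real.div_rpow hz0.le h2p.le, Real.rpow_neg h2p.le, div_eq_mul_inv, inv_inv]
      -- exponent algebra : (2^{k+1})^ν * (2^k)^{-ν'} = 2^ν * q^k
      have hexp : ((2:ℝ) ^ (k+1)) ^ ν * ((2:ℝ) ^ k) ^ (-ν') = (2:ℝ) ^ ν * q ^ k := by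
        rw [show ((2:ℝ) ^ (k+1) : ℝ) = (2:ℝ) ^ (((k+1):ℕ):ℝ) from (Real.rpow_natCast 2 (k+1)).symm,
          show ((2:ℝ) ^ k : ℝ) = (2:ℝ) ^ ((k:ℕ):ℝ) from (Real.rpow_natCast 2 k).symm,
          ← Real.rpow_natCast q k, hqdef,
          ← Real.rpow_mul (by norm_num : (0:ℝ) ≤ 2),
          ← Real.rpow_mul (by norm_num : (0:ℝ) ≤ 2),
          ← Real.rpow_mul (by norm_num : (0:ℝ) ≤ 2),
          ← Real.rpow_add two_pos, ← Real.rpow_add two_pos]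
        congr 1
        push_cast
        ring
      have hXb : (ℙ {ω | w ≤ X ω}).toReal
          ≤ κ₂X * (z ^ (-ν) * ((2:ℝ) ^ (k+1)) ^ ν * Real.log z ^ n) := by
        refine le_trans hX' (mul_le_mul_of_nonneg_left ?_ hκ₂X.le)
        rw [hwν]
        have h2ν : (0:ℝ) < ((2:ℝ) ^ (k+1) : ℝ) ^ ν := Real.rpow_pos_of_pos h2p ν
        have hzν : (0:ℝ) < z ^ (-ν) := Real.rpow_pos_of_pos hz0 (-ν)
        exact mul_le_mul_of_nonneg_left hlogww (by positivity)
      rw [hEk]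
      calc (ℙ {ω | w ≤ X ω}).toReal * (ℙ {ω | (2:ℝ) ^ k ≤ Y ω}).toReal
          ≤ (κ₂X * (z ^ (-ν) * ((2:ℝ) ^ (k+1)) ^ ν * Real.log z ^ n))
              * (CY * ((2:ℝ) ^ k) ^ (-ν')) := by
            refine mul_le_mul hXb hY' ENNReal.toReal_nonneg ?_
            have := Real.rpow_pos_of_pos hz0 (-ν)
            have := Real.rpow_pos_of_pos h2p ν
            positivity
        _ = Dc * q ^ k * (z ^ (-ν) * Real.log z ^ n) := by
            rw [hDc]
            linear_combination (κ₂X * CY * (z ^ (-ν) * Real.log z ^ n)) * hexp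
    -- sum the slabs
    have hsum : ∑ k ∈ Finset.range (K+1), (ℙ (E k)).toReal
        ≤ Dc * (1 - q)⁻¹ * (z ^ (-ν) * Real.log z ^ n) := by
      calc ∑ k ∈ Finset.range (K+1), (ℙ (E k)).toReal
          ≤ ∑ k ∈ Finset.range (K+1), Dc * q ^ k * (z ^ (-ν) * Real.log z ^ n) :=
            Finset.sum_le_sum hkey
        _ = Dc * (z ^ (-ν) * Real.log z ^ n) * ∑ k ∈ Finset.range (K+1), q ^ k := by
            rw [Finset.mul_sum]; apply Finset.sum_congr rfl; intro k _; ring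
        _ ≤ Dc * (z ^ (-ν) * Real.log z ^ n) * (1 - q)⁻¹ := by
            refine mul_le_mul_of_nonneg_left ?_ (by positivity)
            calc ∑ k ∈ Finset.range (K+1), q ^ k
                ≤ ∑' k : ℕ, q ^ k := (summable_geometric_of_lt_one hq0.le hq1).sum_le_tsum _
                  (fun i _ => pow_nonneg hq0.le i)
              _ = (1 - q)⁻¹ := tsum_geometric_of_lt_one hq0.le hq1
        _ = Dc * (1 - q)⁻¹ * (z ^ (-ν) * Real.log z ^ n) := by ring
    -- combine
    calc (ℙ {ω | z ≤ X ω * Y ω}).toReal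
        ≤ (ℙ {ω | z ≤ X ω}).toReal + (ℙ {ω | z ^ θ ≤ Y ω}).toReal
            + ∑ k ∈ Finset.range (K+1), (ℙ (E k)).toReal := htoReal
      _ ≤ κ₂X * (z ^ (-ν) * Real.log z ^ n) + CY * (z ^ (-ν) * Real.log z ^ n)
            + Dc * (1 - q)⁻¹ * (z ^ (-ν) * Real.log z ^ n) :=
          add_le_add (add_le_add hT1 hT2) hsum
      _ = κ₂f * (z ^ (-ν) * Real.log z ^ n) := by rw [hκ₂f]; ring
      _ ≤ max κ₁f κ₂f * (z ^ (-ν) * Real.log z ^ n) :=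
          mul_le_mul_of_nonneg_right (le_max_right _ _) hfz0
end

section
/- Let θ > 0, m ≥ 1 an integer, and n₁, …, n_m ∈ ℕ. Let X₁, …, X_m be jointly independent positive random variables on a probability space such that P[X_i ≥ z] ≍ z^{-θ} (log z)^{n_i} as z → ∞ for each i. Then P[X₁ X₂ ⋯ X_m ≥ z] ≍ z^{-θ} (log z)^{n₁ + ⋯ + n_m + m - 1} as z → ∞. -/
open MeasureTheory ProbabilityTheory Real

lemma upper_global {θ : ℝ} (hθ : 0 < θ) (a : ℕ) {T : ℝ → ℝ} (hT1 : ∀ z, T z ≤ 1)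
    {c z₀ : ℝ} (hc : 0 < c) (hz₀ : 0 < z₀)
    (hub : ∀ z, z₀ ≤ z → T z ≤ c * (z ^ (-θ) * Real.log z ^ a)) :
    ∃ M, 0 < M ∧ ∀ s, 1 ≤ s → T s ≤ M * (s ^ (-θ) * max (Real.log s) 1 ^ a) := by
  refine ⟨max c (z₀ ^ θ), lt_max_of_lt_left hc, fun s hs => ?_⟩
  have hs0 : (0:ℝ) < s := lt_of_lt_of_le one_pos hs
  have hsp : (0:ℝ) < s ^ (-θ) := Real.rpow_pos_of_pos hs0 _
  have hmax1 : (1:ℝ) ≤ max (Real.log s) 1 := le_max_right _ _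
  have hmaxpow : (1:ℝ) ≤ max (Real.log s) 1 ^ a := one_le_pow₀ hmax1
  by_cases h : z₀ ≤ s
  · have h1 := hub s h
    have hlog : Real.log s ^ a ≤ max (Real.log s) 1 ^ a :=
      pow_le_pow_left₀ (Real.log_nonneg hs) (le_max_left _ _) a
    calc T s ≤ c * (s ^ (-θ) * Real.log s ^ a) := h1
      _ ≤ max c (z₀ ^ θ) * (s ^ (-θ) * max (Real.log s) 1 ^ a) := by
          apply mul_le_mul (le_max_left _ _) (by nlinarith)
            (mul_nonneg hsp.le (pow_nonneg (Real.log_nonneg hs) a))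
            (le_trans hc.le (le_max_left _ _))
  · push_neg at h
    have h2 : (1:ℝ) ≤ z₀ ^ θ * s ^ (-θ) := by
      have : s ^ θ ≤ z₀ ^ θ := Real.rpow_le_rpow hs0.le h.le hθ.le
      have hinv : s ^ (-θ) = (s ^ θ)⁻¹ := by rw [Real.rpow_neg hs0.le]
      rw [hinv, ← div_eq_mul_inv, le_div_iff₀ (Real.rpow_pos_of_pos hs0 θ)]
      simpa using this
    calc T s ≤ 1 := hT1 s
      _ ≤ z₀ ^ θ * s ^ (-θ) := h2
      _ ≤ max c (z₀ ^ θ) * (s ^ (-θ) * max (Real.log s) 1 ^ a) := by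
          have hz : (0:ℝ) < z₀ ^ θ := Real.rpow_pos_of_pos hz₀ _
          have : z₀ ^ θ * s ^ (-θ) * 1 ≤ max c (z₀ ^ θ) * (s ^ (-θ) * max (Real.log s) 1 ^ a) := by
            rw [mul_assoc]
            apply mul_le_mul (le_max_right _ _) (by nlinarith) (by positivity)
              (le_trans hz.le (le_max_right _ _))
          simpa using this

section
variable {Ω : Type*} [MeasureSpace Ω] [IsProbabilityMeasure (ℙ : Measure Ω)]

lemma tail_anti {X : Ω → ℝ} {s t : ℝ} (h : s ≤ t) :
    (ℙ {ω | t ≤ X ω}).toReal ≤ (ℙ {ω | s ≤ X ω}).toReal :=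
  ENNReal.toReal_mono (measure_ne_top _ _) (measure_mono fun ω hω => le_trans h hω)

lemma tail_le_one (A : Set Ω) : (ℙ A).toReal ≤ 1 := by
  simpa using ENNReal.toReal_mono ENNReal.one_ne_top (prob_le_one (μ := ℙ) (s := A))

lemma two_var_upper {θ : ℝ} (hθ : 0 < θ) (a b : ℕ) {X Y : Ω → ℝ}
    (hXm : Measurable X) (hYm : Measurable Y)
    (hXpos : ∀ᵐ ω ∂ℙ, 0 < X ω) (hYpos : ∀ᵐ ω ∂ℙ, 0 < Y ω)
    (hind : IndepFun X Y ℙ)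
    {MX MY : ℝ} (hMX : 0 < MX) (hMY : 0 < MY)
    (hMXb : ∀ s, 1 ≤ s → (ℙ {ω | s ≤ X ω}).toReal ≤ MX * (s ^ (-θ) * max (Real.log s) 1 ^ a))
    (hMYb : ∀ s, 1 ≤ s → (ℙ {ω | s ≤ Y ω}).toReal ≤ MY * (s ^ (-θ) * max (Real.log s) 1 ^ b)) :
    ∀ z, Real.exp 1 ≤ z → (ℙ {ω | z ≤ X ω * Y ω}).toReal ≤
      (MY + MX * MY * Real.exp θ + MX * Real.exp θ) * (z ^ (-θ) * Real.log z ^ (a + b + 1)) := by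
  intro z hz
  have hzpos : (0:ℝ) < z := lt_of_lt_of_le (Real.exp_pos 1) hz
  set L := Real.log z with hLdef
  have hL1 : (1:ℝ) ≤ L := by
    rw [hLdef, Real.le_log_iff_exp_le hzpos]; exact hz
  have hL0 : (0:ℝ) ≤ L := le_trans zero_le_one hL1
  have hzexp : z = Real.exp L := (Real.exp_log hzpos).symm
  have hzrpow : z ^ (-θ) = Real.exp (-(θ * L)) := by
    rw [hzexp, ← Real.exp_mul]; ring_nf
  have hfpos : (0:ℝ) ≤ z ^ (-θ) * L ^ (a + b + 1) := by positivity
  have h1K : 1 ≤ ⌊L⌋₊ := Nat.le_floor (by exact_mod_cast hL1)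
  set K := ⌊L⌋₊ - 1 with hKdef
  have hK1 : K + 1 = ⌊L⌋₊ := by omega
  -- the covering events
  set A : ℕ → Set Ω := fun k =>
    (X ⁻¹' Set.Ici (Real.exp k)) ∩ (Y ⁻¹' Set.Ici (z * Real.exp (-((k:ℝ) + 1)))) with hAdef
  set C1 : Set Ω := Y ⁻¹' Set.Ici z with hC1
  set C2 : Set Ω := ⋃ k ∈ Finset.range (K + 1), A k with hC2
  set C3 : Set Ω := X ⁻¹' Set.Ici (Real.exp ((K:ℝ) + 1)) with hC3
  have hsub : ∀ ω, 0 < X ω → 0 < Y ω → z ≤ X ω * Y ω → ω ∈ C1 ∪ C2 ∪ C3 := by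
    intro ω hXp hYp hXY
    by_cases h1 : X ω < 1
    · left; left
      have : X ω * Y ω ≤ Y ω := mul_le_of_le_one_left hYp.le h1.le
      exact le_trans hXY this
    push_neg at h1
    by_cases h2 : Real.exp ((K:ℝ) + 1) ≤ X ω
    · right; exact h2
    push_neg at h2
    left; right
    set u := Real.log (X ω) with hu
    have hu0 : 0 ≤ u := Real.log_nonneg h1
    set k := ⌊u⌋₊ with hk
    have hXu : X ω = Real.exp u := (Real.exp_log hXp).symm
    have hmem : k ∈ Finset.range (K + 1) := by
      rw [Finset.mem_range]
      have : u < (K:ℝ) + 1 := by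
        rw [← Real.exp_lt_exp]; rw [← hXu]; exact h2
      have : u < ((K + 1 : ℕ) : ℝ) := by push_cast; exact this
      exact (Nat.floor_lt hu0).mpr this
    refine Set.mem_biUnion hmem ⟨?_, ?_⟩
    · show Real.exp (k:ℝ) ≤ X ω
      rw [hXu]; exact Real.exp_le_exp.mpr (Nat.floor_le hu0)
    · show z * Real.exp (-((k:ℝ) + 1)) ≤ Y ω
      have hXlt : X ω ≤ Real.exp ((k:ℝ) + 1) := by
        rw [hXu]; exact (Real.exp_le_exp.mpr (Nat.lt_floor_add_one u).le)
      have h3 : z ≤ Real.exp ((k:ℝ) + 1) * Y ω :=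
        le_trans hXY (mul_le_mul_of_nonneg_right hXlt hYp.le)
      have hee : Real.exp (-((k:ℝ) + 1)) * Real.exp ((k:ℝ) + 1) = 1 := by
        rw [← Real.exp_add, show -((k:ℝ) + 1) + ((k:ℝ) + 1) = 0 by ring]
        exact Real.exp_zero
      have := mul_le_mul_of_nonneg_left h3 (Real.exp_nonneg (-((k:ℝ) + 1)))
      rw [← mul_assoc, hee, one_mul] at this
      linarith [this]
  have hmono : ℙ {ω | z ≤ X ω * Y ω} ≤ ℙ (C1 ∪ C2 ∪ C3) := by
    apply measure_mono_ae
    filter_upwards [hXpos, hYpos] with ω h1 h2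
    exact fun h3 => hsub ω h1 h2 h3
  have hsum : ℙ (C1 ∪ C2 ∪ C3) ≤
      ℙ C1 + (∑ k ∈ Finset.range (K + 1), ℙ (A k)) + ℙ C3 := by
    refine le_trans (measure_union_le _ _) (add_le_add_left ?_ _)
    refine le_trans (measure_union_le _ _) (add_le_add_right ?_ _)
    exact measure_biUnion_finset_le _ _
  have hAk : ∀ k, ℙ (A k) = ℙ (X ⁻¹' Set.Ici (Real.exp k))
      * ℙ (Y ⁻¹' Set.Ici (z * Real.exp (-((k:ℝ) + 1)))) := fun k =>
    hind.measure_inter_preimage_eq_mul _ _ measurableSet_Ici measurableSet_Ici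
  -- pass to reals
  have hSne : (∑ k ∈ Finset.range (K + 1), ℙ (A k)) ≠ ⊤ :=
    (ENNReal.sum_lt_top.mpr (fun k _ => measure_lt_top ℙ (A k))).ne
  have step1 : (ℙ {ω | z ≤ X ω * Y ω}).toReal ≤
      (ℙ C1).toReal + (∑ k ∈ Finset.range (K + 1),
        (ℙ (X ⁻¹' Set.Ici (Real.exp k))).toReal
          * (ℙ (Y ⁻¹' Set.Ici (z * Real.exp (-((k:ℝ) + 1))))).toReal) + (ℙ C3).toReal := by
    have hne : (ℙ C1 + (∑ k ∈ Finset.range (K + 1), ℙ (A k)) + ℙ C3) ≠ ⊤ :=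
      ENNReal.add_ne_top.mpr ⟨ENNReal.add_ne_top.mpr ⟨measure_ne_top _ _, hSne⟩,
        measure_ne_top _ _⟩
    have h4 := ENNReal.toReal_mono hne (le_trans hmono hsum)
    refine le_trans h4 (le_of_eq ?_)
    rw [ENNReal.toReal_add (ENNReal.add_ne_top.mpr ⟨measure_ne_top _ _, hSne⟩)
        (measure_ne_top _ _),
      ENNReal.toReal_add (measure_ne_top _ _) hSne,
      ENNReal.toReal_sum (fun k _ => measure_ne_top ℙ (A k))]
    congr 2
    refine Finset.sum_congr rfl fun k _ => ?_
    rw [hAk k, ENNReal.toReal_mul]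
  -- numeric estimates
  have hexp1 : ∀ {x : ℝ}, 0 ≤ x → (1:ℝ) ≤ Real.exp x := fun {x} hx => by
    simpa using Real.exp_le_exp.mpr hx
  have hbound : ∀ k ∈ Finset.range (K + 1),
      (ℙ (X ⁻¹' Set.Ici (Real.exp k))).toReal
        * (ℙ (Y ⁻¹' Set.Ici (z * Real.exp (-((k:ℝ) + 1))))).toReal
      ≤ MX * MY * Real.exp θ * (Real.exp (-(θ * L)) * (L ^ a * L ^ b)) := by
    intro k hk
    have hkr0 : (0:ℝ) ≤ (k:ℝ) := Nat.cast_nonneg k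
    have hkK : (k:ℝ) + 1 ≤ L := by
      have h5 : k + 1 ≤ ⌊L⌋₊ := by
        have := Finset.mem_range.mp hk; omega
      calc (k:ℝ) + 1 = ((k + 1 : ℕ) : ℝ) := by push_cast; ring
        _ ≤ (⌊L⌋₊ : ℝ) := by exact_mod_cast h5
        _ ≤ L := Nat.floor_le hL0
    have hXf : (ℙ (X ⁻¹' Set.Ici (Real.exp (k:ℝ)))).toReal
        ≤ MX * (Real.exp (-(θ * (k:ℝ))) * max (k:ℝ) 1 ^ a) := by
      have h6 := hMXb (Real.exp (k:ℝ)) (hexp1 hkr0)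
      rw [Real.log_exp, ← Real.exp_mul, show (k:ℝ) * -θ = -(θ * (k:ℝ)) by ring] at h6
      exact h6
    have hYeq : z * Real.exp (-((k:ℝ) + 1)) = Real.exp (L - ((k:ℝ) + 1)) := by
      rw [hzexp, ← Real.exp_add, sub_eq_add_neg]
    have hYf : (ℙ (Y ⁻¹' Set.Ici (z * Real.exp (-((k:ℝ) + 1))))).toReal
        ≤ MY * (Real.exp (-(θ * (L - ((k:ℝ) + 1)))) * max (L - ((k:ℝ) + 1)) 1 ^ b) := by
      have h6 := hMYb (z * Real.exp (-((k:ℝ) + 1))) (by rw [hYeq]; exact hexp1 (by linarith))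
      rw [hYeq] at h6 ⊢
      rw [Real.log_exp, ← Real.exp_mul,
        show (L - ((k:ℝ) + 1)) * -θ = -(θ * (L - ((k:ℝ) + 1))) by ring] at h6
      exact h6
    have hmaxa : max (k:ℝ) 1 ^ a ≤ L ^ a :=
      pow_le_pow_left₀ (by positivity) (max_le (by linarith) hL1) a
    have hmaxb : max (L - ((k:ℝ) + 1)) 1 ^ b ≤ L ^ b :=
      pow_le_pow_left₀ (by positivity) (max_le (by linarith) hL1) b
    have hexpc : Real.exp (-(θ * (k:ℝ))) * Real.exp (-(θ * (L - ((k:ℝ) + 1))))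
        = Real.exp θ * Real.exp (-(θ * L)) := by
      rw [← Real.exp_add, ← Real.exp_add]; congr 1; ring
    have hnn1 : (0:ℝ) ≤ MX * (Real.exp (-(θ * (k:ℝ))) * max (k:ℝ) 1 ^ a) := by positivity
    calc (ℙ (X ⁻¹' Set.Ici (Real.exp k))).toReal
          * (ℙ (Y ⁻¹' Set.Ici (z * Real.exp (-((k:ℝ) + 1))))).toReal
        ≤ (MX * (Real.exp (-(θ * (k:ℝ))) * max (k:ℝ) 1 ^ a))
          * (MY * (Real.exp (-(θ * (L - ((k:ℝ) + 1)))) * max (L - ((k:ℝ) + 1)) 1 ^ b)) :=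
          mul_le_mul hXf hYf ENNReal.toReal_nonneg hnn1
      _ = MX * MY * (Real.exp (-(θ * (k:ℝ))) * Real.exp (-(θ * (L - ((k:ℝ) + 1)))))
          * (max (k:ℝ) 1 ^ a * max (L - ((k:ℝ) + 1)) 1 ^ b) := by ring
      _ = MX * MY * (Real.exp θ * Real.exp (-(θ * L)))
          * (max (k:ℝ) 1 ^ a * max (L - ((k:ℝ) + 1)) 1 ^ b) := by rw [hexpc]
      _ ≤ MX * MY * (Real.exp θ * Real.exp (-(θ * L))) * (L ^ a * L ^ b) := by
          refine mul_le_mul_of_nonneg_left ?_ (by positivity)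
          exact mul_le_mul hmaxa hmaxb (by positivity) (by positivity)
      _ = MX * MY * Real.exp θ * (Real.exp (-(θ * L)) * (L ^ a * L ^ b)) := by ring
  have hsum2 : (∑ k ∈ Finset.range (K + 1),
      (ℙ (X ⁻¹' Set.Ici (Real.exp k))).toReal
        * (ℙ (Y ⁻¹' Set.Ici (z * Real.exp (-((k:ℝ) + 1))))).toReal)
      ≤ MX * MY * Real.exp θ * (z ^ (-θ) * L ^ (a + b + 1)) := by
    have h8 := Finset.sum_le_card_nsmul _ _ _ hbound
    rw [Finset.card_range, nsmul_eq_mul] at h8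
    refine le_trans h8 ?_
    have h9 : ((K + 1 : ℕ) : ℝ) ≤ L := by
      rw [hK1]; exact Nat.floor_le hL0
    have h10 : (0:ℝ) ≤ MX * MY * Real.exp θ * (Real.exp (-(θ * L)) * (L ^ a * L ^ b)) := by
      positivity
    calc ((K + 1 : ℕ) : ℝ) * (MX * MY * Real.exp θ * (Real.exp (-(θ * L)) * (L ^ a * L ^ b)))
        ≤ L * (MX * MY * Real.exp θ * (Real.exp (-(θ * L)) * (L ^ a * L ^ b))) :=
          mul_le_mul_of_nonneg_right h9 h10
      _ = MX * MY * Real.exp θ * (z ^ (-θ) * L ^ (a + b + 1)) := by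
          rw [hzrpow, show a + b + 1 = (a + b) + 1 by ring, pow_succ, pow_add]; ring
  have hC1b : (ℙ C1).toReal ≤ MY * (z ^ (-θ) * L ^ (a + b + 1)) := by
    have h1z : (1:ℝ) ≤ z := le_trans (hexp1 zero_le_one) hz
    have h6 := hMYb z h1z
    rw [← hLdef, max_eq_left hL1] at h6
    refine le_trans h6 ?_
    have : L ^ b ≤ L ^ (a + b + 1) := pow_le_pow_right₀ hL1 (by omega)
    have hzp : (0:ℝ) ≤ z ^ (-θ) := (Real.rpow_pos_of_pos hzpos _).le
    nlinarith [mul_le_mul_of_nonneg_left this hzp]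
  have hC3b : (ℙ C3).toReal ≤ MX * Real.exp θ * (z ^ (-θ) * L ^ (a + b + 1)) := by
    have h7 : Real.exp (L - 1) ≤ Real.exp ((K:ℝ) + 1) := by
      apply Real.exp_le_exp.mpr
      have := Nat.sub_one_lt_floor L
      have hcast : ((K:ℝ) + 1) = (⌊L⌋₊ : ℝ) := by
        rw [show ((K:ℝ) + 1) = ((K + 1 : ℕ) : ℝ) by push_cast; ring, hK1]
      rw [hcast]; linarith
    have h8 : (ℙ C3).toReal ≤ (ℙ {ω | Real.exp (L - 1) ≤ X ω}).toReal := tail_anti h7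
    have h6 := hMXb (Real.exp (L - 1)) (hexp1 (by linarith))
    rw [Real.log_exp, ← Real.exp_mul, show (L - 1) * -θ = θ + -(θ * L) by ring,
      Real.exp_add] at h6
    have h9 : max (L - 1) 1 ^ a ≤ L ^ a :=
      pow_le_pow_left₀ (by positivity) (max_le (by linarith) hL1) a
    have h10 : L ^ a ≤ L ^ (a + b + 1) := pow_le_pow_right₀ hL1 (by omega)
    have hzp : (0:ℝ) < Real.exp (-(θ * L)) := Real.exp_pos _
    refine le_trans h8 (le_trans h6 ?_)
    rw [hzrpow]
    calc MX * (Real.exp θ * Real.exp (-(θ * L)) * (max (L - 1) 1) ^ a)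
        = (MX * Real.exp θ) * (Real.exp (-(θ * L)) * (max (L - 1) 1) ^ a) := by ring
      _ ≤ (MX * Real.exp θ) * (Real.exp (-(θ * L)) * L ^ (a + b + 1)) := by
          refine mul_le_mul_of_nonneg_left ?_ (by positivity)
          exact mul_le_mul_of_nonneg_left (le_trans h9 h10) hzp.le
      _ = MX * Real.exp θ * (Real.exp (-(θ * L)) * L ^ (a + b + 1)) := by ring
  calc (ℙ {ω | z ≤ X ω * Y ω}).toReal
      ≤ (ℙ C1).toReal + (∑ k ∈ Finset.range (K + 1),
        (ℙ (X ⁻¹' Set.Ici (Real.exp k))).toReal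
          * (ℙ (Y ⁻¹' Set.Ici (z * Real.exp (-((k:ℝ) + 1))))).toReal) + (ℙ C3).toReal := step1
    _ ≤ MY * (z ^ (-θ) * L ^ (a + b + 1)) + MX * MY * Real.exp θ * (z ^ (-θ) * L ^ (a + b + 1))
        + MX * Real.exp θ * (z ^ (-θ) * L ^ (a + b + 1)) := by
        exact add_le_add (add_le_add hC1b hsum2) hC3b
    _ = (MY + MX * MY * Real.exp θ + MX * Real.exp θ) * (z ^ (-θ) * L ^ (a + b + 1)) := by ring
set_option maxHeartbeats 2000000 in
lemma two_var_lower {θ : ℝ} (hθ : 0 < θ) (a b : ℕ) {X Y : Ω → ℝ}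
    (hXm : Measurable X) (hYm : Measurable Y) (hind : IndepFun X Y ℙ)
    {c₁ c₂ zX : ℝ} (hc₁ : 0 < c₁) (hc₂ : 0 < c₂) (hzX : 0 < zX)
    (hXlow : ∀ z, zX ≤ z → c₁ * (z ^ (-θ) * Real.log z ^ a) ≤ (ℙ {ω | z ≤ X ω}).toReal)
    (hXup : ∀ z, zX ≤ z → (ℙ {ω | z ≤ X ω}).toReal ≤ c₂ * (z ^ (-θ) * Real.log z ^ a))
    {d₁ zY : ℝ} (hd₁ : 0 < d₁) (hzY : 0 < zY)
    (hYlow : ∀ z, zY ≤ z → d₁ * (z ^ (-θ) * Real.log z ^ b) ≤ (ℙ {ω | z ≤ Y ω}).toReal) :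
    ∃ c Z₀ : ℝ, 0 < c ∧ 0 < Z₀ ∧ ∀ z, Z₀ ≤ z →
      c * (z ^ (-θ) * Real.log z ^ (a + b + 1)) ≤ (ℙ {ω | z ≤ X ω * Y ω}).toReal := by
  classical
  set D : ℕ := ⌈Real.log (2 ^ (a + 1) * c₂ / c₁) / θ⌉₊ + 1 with hDdef
  have hD1 : 1 ≤ D := by rw [hDdef]; omega
  have hDpos : (0:ℝ) < (D:ℝ) := by exact_mod_cast hD1
  have hDkey : c₂ * 2 ^ a * Real.exp (-(θ * (D:ℝ))) ≤ c₁ / 2 := by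
    have hr : (0:ℝ) < 2 ^ (a + 1) * c₂ / c₁ := by positivity
    have h1 : Real.log (2 ^ (a + 1) * c₂ / c₁) / θ ≤ (D:ℝ) := by
      have h0 := Nat.le_ceil (Real.log (2 ^ (a + 1) * c₂ / c₁) / θ)
      have h2 : ((⌈Real.log (2 ^ (a + 1) * c₂ / c₁) / θ⌉₊ : ℕ) : ℝ) ≤ (D:ℝ) := by
        rw [hDdef]; push_cast; linarith
      linarith
    have h2 : Real.log (2 ^ (a + 1) * c₂ / c₁) ≤ θ * (D:ℝ) := by
      rw [div_le_iff₀ hθ] at h1; linarith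
    have h3 : 2 ^ (a + 1) * c₂ / c₁ ≤ Real.exp (θ * (D:ℝ)) := by
      rw [← Real.exp_log hr]; exact Real.exp_le_exp.mpr h2
    rw [Real.exp_neg, ← div_eq_mul_inv, div_le_iff₀ (Real.exp_pos _)]
    have h4 : c₁ / 2 * (2 ^ (a + 1) * c₂ / c₁) = 2 ^ a * c₂ := by
      field_simp; ring
    nlinarith [mul_le_mul_of_nonneg_left h3 (by positivity : (0:ℝ) ≤ c₁ / 2)]
  refine ⟨c₁ * d₁ / (48 * (D:ℝ) * 3 ^ a * 2 ^ b),
    Real.exp (24 * ((D:ℝ) + 1) + 3 * max (Real.log zX) 1 + 2 * max (Real.log zY) 1),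
    by positivity, Real.exp_pos _, ?_⟩
  intro z hz
  have hzpos : (0:ℝ) < z := lt_of_lt_of_le (Real.exp_pos _) hz
  set L := Real.log z with hLdef
  have hLge : 24 * ((D:ℝ) + 1) + 3 * max (Real.log zX) 1 + 2 * max (Real.log zY) 1 ≤ L := by
    rw [hLdef, Real.le_log_iff_exp_le hzpos]; exact hz
  have hmx : (1:ℝ) ≤ max (Real.log zX) 1 := le_max_right _ _
  have hmy : (1:ℝ) ≤ max (Real.log zY) 1 := le_max_right _ _
  have hL24D : 24 * ((D:ℝ) + 1) ≤ L := by linarith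
  have hL1 : (1:ℝ) ≤ L := by linarith
  have hL0 : (0:ℝ) ≤ L := by linarith
  have hLzX : 3 * Real.log zX ≤ L := by
    have := le_max_left (Real.log zX) 1; linarith
  have hLzY : 2 * Real.log zY ≤ L := by
    have := le_max_left (Real.log zY) 1; linarith
  have hzexp : z = Real.exp L := (Real.exp_log hzpos).symm
  have hzrpow : z ^ (-θ) = Real.exp (-(θ * L)) := by
    rw [hzexp, ← Real.exp_mul]; ring_nf
  set k0 : ℕ := ⌈L / 3⌉₊ with hk0def
  set N : ℕ := ⌊L / (12 * (D:ℝ))⌋₊ with hNdef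
  have hk0low : L / 3 ≤ (k0:ℝ) := Nat.le_ceil _
  have hk0up : (k0:ℝ) ≤ L / 3 + 1 := (Nat.ceil_lt_add_one (by positivity)).le
  have hNle : (N:ℝ) ≤ L / (12 * (D:ℝ)) := Nat.floor_le (by positivity)
  have hND : (N:ℝ) * (D:ℝ) ≤ L / 12 := by
    have h5 := mul_le_mul_of_nonneg_right hNle hDpos.le
    have h6 : L / (12 * (D:ℝ)) * (D:ℝ) = L / 12 := by field_simp
    linarith
  have hNge : L / (24 * (D:ℝ)) ≤ (N:ℝ) := by
    have h5 := Nat.sub_one_lt_floor (L / (12 * (D:ℝ)))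
    have hx2 : (2:ℝ) ≤ L / (12 * (D:ℝ)) := by
      rw [le_div_iff₀ (by positivity)]; linarith
    have h6 : L / (24 * (D:ℝ)) * 2 = L / (12 * (D:ℝ)) := by field_simp; ring
    have h7 : (⌊L / (12 * (D:ℝ))⌋₊ : ℝ) = (N:ℝ) := by rw [hNdef]
    nlinarith
  -- facts about the block indices
  have hkjfacts : ∀ j, j < N →
      L / 3 ≤ ((k0 + j * D : ℕ) : ℝ) ∧ ((k0 + j * D + D : ℕ) : ℝ) ≤ L / 2 := by
    intro j hj
    have hc1 : ((k0 + j * D : ℕ) : ℝ) = (k0:ℝ) + (j:ℝ) * (D:ℝ) := by push_cast; ring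
    have hc2 : ((k0 + j * D + D : ℕ) : ℝ) = (k0:ℝ) + ((j:ℝ) + 1) * (D:ℝ) := by push_cast; ring
    have hj1 : ((j:ℝ) + 1) ≤ (N:ℝ) := by exact_mod_cast Nat.succ_le_of_lt hj
    have h8 : ((j:ℝ) + 1) * (D:ℝ) ≤ (N:ℝ) * (D:ℝ) := mul_le_mul_of_nonneg_right hj1 hDpos.le
    constructor
    · rw [hc1]
      have : (0:ℝ) ≤ (j:ℝ) * (D:ℝ) := by positivity
      linarith
    · rw [hc2]; linarith
  -- the blocks
  set B : ℕ → Set Ω := fun j =>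
    (X ⁻¹' Set.Ico (Real.exp ((k0 + j * D : ℕ) : ℝ)) (Real.exp ((k0 + j * D + D : ℕ) : ℝ)))
      ∩ (Y ⁻¹' Set.Ici (z * Real.exp (-((k0 + j * D : ℕ) : ℝ)))) with hBdef
  have hBsub : ∀ j, B j ⊆ {ω | z ≤ X ω * Y ω} := by
    intro j ω hω
    obtain ⟨⟨hx1, hx2⟩, hy⟩ := hω
    have hy' : z * Real.exp (-((k0 + j * D : ℕ) : ℝ)) ≤ Y ω := hy
    have hid : Real.exp ((k0 + j * D : ℕ) : ℝ) * (z * Real.exp (-((k0 + j * D : ℕ) : ℝ))) = z := by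
      rw [show Real.exp ((k0 + j * D : ℕ) : ℝ) * (z * Real.exp (-((k0 + j * D : ℕ) : ℝ)))
        = z * (Real.exp ((k0 + j * D : ℕ) : ℝ) * Real.exp (-((k0 + j * D : ℕ) : ℝ))) by ring,
        ← Real.exp_add, show ((k0 + j * D : ℕ) : ℝ) + -((k0 + j * D : ℕ) : ℝ) = 0 by ring,
        Real.exp_zero, mul_one]
    show z ≤ X ω * Y ω
    calc z = Real.exp ((k0 + j * D : ℕ) : ℝ) * (z * Real.exp (-((k0 + j * D : ℕ) : ℝ))) :=
          hid.symm
      _ ≤ X ω * Y ω := by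
          refine mul_le_mul hx1 hy' (by positivity) ?_
          exact le_trans (Real.exp_pos _).le hx1
  have hdj : ∀ i j : ℕ, i < j → Disjoint (B i) (B j) := by
    intro i j hij
    rw [Set.disjoint_left]
    intro ω h1 h2
    have hle : k0 + i * D + D ≤ k0 + j * D := by
      have h1 : (i + 1) * D ≤ j * D := Nat.mul_le_mul_right D (Nat.succ_le_of_lt hij)
      rw [Nat.succ_mul] at h1
      omega
    have hle' : ((k0 + i * D + D : ℕ) : ℝ) ≤ ((k0 + j * D : ℕ) : ℝ) := by exact_mod_cast hle
    have hx1 : X ω < Real.exp ((k0 + i * D + D : ℕ) : ℝ) := h1.1.2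
    have hx2 : Real.exp ((k0 + j * D : ℕ) : ℝ) ≤ X ω := h2.1.1
    have := Real.exp_le_exp.mpr hle'
    linarith
  have hdisj : (↑(Finset.range N) : Set ℕ).PairwiseDisjoint B := by
    intro i _ j _ hij
    rcases lt_or_gt_of_ne hij with h | h
    · exact hdj i j h
    · exact (hdj j i h).symm
  have hmeasB : ∀ j ∈ Finset.range N, MeasurableSet (B j) := fun j _ =>
    (hXm measurableSet_Ico).inter (hYm measurableSet_Ici)
  have hUB : ℙ (⋃ j ∈ Finset.range N, B j) = ∑ j ∈ Finset.range N, ℙ (B j) :=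
    measure_biUnion_finset hdisj hmeasB
  have hsum_le : ∑ j ∈ Finset.range N, (ℙ (B j)).toReal ≤ (ℙ {ω | z ≤ X ω * Y ω}).toReal := by
    rw [← ENNReal.toReal_sum (fun j _ => measure_ne_top ℙ (B j))]
    refine ENNReal.toReal_mono (measure_ne_top _ _) ?_
    rw [← hUB]
    exact measure_mono (Set.iUnion₂_subset fun j _ => hBsub j)
  -- value of each block
  have hBval : ∀ j, (ℙ (B j)).toReal =
      ((ℙ (X ⁻¹' Set.Ici (Real.exp ((k0 + j * D : ℕ) : ℝ)))).toReal
        - (ℙ (X ⁻¹' Set.Ici (Real.exp ((k0 + j * D + D : ℕ) : ℝ)))).toReal)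
      * (ℙ (Y ⁻¹' Set.Ici (z * Real.exp (-((k0 + j * D : ℕ) : ℝ))))).toReal := by
    intro j
    have hexple : Real.exp ((k0 + j * D : ℕ) : ℝ) ≤ Real.exp ((k0 + j * D + D : ℕ) : ℝ) := by
      apply Real.exp_le_exp.mpr; exact_mod_cast Nat.le_add_right _ _
    have hsubIci : X ⁻¹' Set.Ici (Real.exp ((k0 + j * D + D : ℕ) : ℝ))
        ⊆ X ⁻¹' Set.Ici (Real.exp ((k0 + j * D : ℕ) : ℝ)) :=
      Set.preimage_mono (Set.Ici_subset_Ici.mpr hexple)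
    have h1 : ℙ (B j) = ℙ (X ⁻¹' Set.Ico (Real.exp ((k0 + j * D : ℕ) : ℝ))
          (Real.exp ((k0 + j * D + D : ℕ) : ℝ)))
        * ℙ (Y ⁻¹' Set.Ici (z * Real.exp (-((k0 + j * D : ℕ) : ℝ)))) :=
      hind.measure_inter_preimage_eq_mul _ _ measurableSet_Ico measurableSet_Ici
    have h2 : X ⁻¹' Set.Ico (Real.exp ((k0 + j * D : ℕ) : ℝ))
          (Real.exp ((k0 + j * D + D : ℕ) : ℝ))
        = X ⁻¹' Set.Ici (Real.exp ((k0 + j * D : ℕ) : ℝ))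
          \ X ⁻¹' Set.Ici (Real.exp ((k0 + j * D + D : ℕ) : ℝ)) := by
      rw [← Set.preimage_diff, Set.Ici_diff_Ici]
    have h3 : ℙ (X ⁻¹' Set.Ico (Real.exp ((k0 + j * D : ℕ) : ℝ))
          (Real.exp ((k0 + j * D + D : ℕ) : ℝ)))
        = ℙ (X ⁻¹' Set.Ici (Real.exp ((k0 + j * D : ℕ) : ℝ)))
          - ℙ (X ⁻¹' Set.Ici (Real.exp ((k0 + j * D + D : ℕ) : ℝ))) := by
      rw [h2]
      exact measure_diff hsubIci (hXm measurableSet_Ici).nullMeasurableSet (measure_ne_top _ _)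
    rw [h1, h3, ENNReal.toReal_mul,
      ENNReal.toReal_sub_of_le (measure_mono hsubIci) (measure_ne_top _ _)]
  -- lower bound for each block
  have hblock : ∀ j ∈ Finset.range N,
      c₁ * d₁ / 2 * (Real.exp (-(θ * L)) * ((L / 3) ^ a * (L / 2) ^ b)) ≤ (ℙ (B j)).toReal := by
    intro j hj
    have hjN := Finset.mem_range.mp hj
    obtain ⟨hu_low, huD_up⟩ := hkjfacts j hjN
    set u : ℝ := ((k0 + j * D : ℕ) : ℝ) with hudef
    have huD : ((k0 + j * D + D : ℕ) : ℝ) = u + (D:ℝ) := by rw [hudef]; push_cast; ring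
    have hu0 : 0 ≤ u := le_trans (by linarith) hu_low
    have huL2 : u ≤ L / 2 := by
      rw [huD] at huD_up; linarith
    have huD_half : u + (D:ℝ) ≤ L / 2 := by rw [huD] at huD_up; exact huD_up
    have hDu : (D:ℝ) ≤ u := by
      have : (D:ℝ) ≤ L / 3 := by linarith
      linarith
    -- tail conditions
    have hzXu : zX ≤ Real.exp u := by
      rw [← Real.exp_log hzX]
      apply Real.exp_le_exp.mpr
      have : Real.log zX ≤ L / 3 := by linarith
      linarith
    have hzXuD : zX ≤ Real.exp (u + (D:ℝ)) := by
      refine le_trans hzXu (Real.exp_le_exp.mpr (by linarith))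
    have hYarg : z * Real.exp (-u) = Real.exp (L - u) := by
      rw [hzexp, ← Real.exp_add, sub_eq_add_neg]
    have hzYu : zY ≤ z * Real.exp (-u) := by
      rw [hYarg, ← Real.exp_log hzY]
      apply Real.exp_le_exp.mpr
      have : Real.log zY ≤ L / 2 := by linarith
      linarith
    -- F bounds
    have hFlow := hXlow (Real.exp u) hzXu
    rw [Real.log_exp, ← Real.exp_mul, show u * -θ = -(θ * u) by ring] at hFlow
    have hFup := hXup (Real.exp (u + (D:ℝ))) hzXuD
    rw [Real.log_exp, ← Real.exp_mul,
      show (u + (D:ℝ)) * -θ = -(θ * u) + -(θ * (D:ℝ)) by ring] at hFup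
    have hFup' : (ℙ {ω | Real.exp (u + (D:ℝ)) ≤ X ω}).toReal
        ≤ c₂ * (Real.exp (-(θ * u)) * Real.exp (-(θ * (D:ℝ))) * (u + (D:ℝ)) ^ a) := by
      rw [← Real.exp_add]; exact hFup
    -- (u + D)^a ≤ 2^a u^a
    have hpow : (u + (D:ℝ)) ^ a ≤ 2 ^ a * u ^ a := by
      have h9 : (u + (D:ℝ)) ≤ 2 * u := by linarith
      calc (u + (D:ℝ)) ^ a ≤ (2 * u) ^ a := pow_le_pow_left₀ (by linarith) h9 a
        _ = 2 ^ a * u ^ a := mul_pow 2 u a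
    have hE : (0:ℝ) < Real.exp (-(θ * u)) := Real.exp_pos _
    have hFup2 : (ℙ {ω | Real.exp (u + (D:ℝ)) ≤ X ω}).toReal
        ≤ c₁ / 2 * (Real.exp (-(θ * u)) * u ^ a) := by
      refine le_trans hFup' ?_
      calc c₂ * (Real.exp (-(θ * u)) * Real.exp (-(θ * (D:ℝ))) * (u + (D:ℝ)) ^ a)
          ≤ c₂ * (Real.exp (-(θ * u)) * Real.exp (-(θ * (D:ℝ))) * (2 ^ a * u ^ a)) := by
            refine mul_le_mul_of_nonneg_left ?_ hc₂.le
            exact mul_le_mul_of_nonneg_left hpow (by positivity)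
        _ = (c₂ * 2 ^ a * Real.exp (-(θ * (D:ℝ)))) * (Real.exp (-(θ * u)) * u ^ a) := by ring
        _ ≤ c₁ / 2 * (Real.exp (-(θ * u)) * u ^ a) :=
            mul_le_mul_of_nonneg_right hDkey (by positivity)
    have hFdiff : c₁ / 2 * (Real.exp (-(θ * u)) * u ^ a)
        ≤ (ℙ (X ⁻¹' Set.Ici (Real.exp u))).toReal
          - (ℙ (X ⁻¹' Set.Ici (Real.exp (u + (D:ℝ))))).toReal := by
      have h11 : (ℙ (X ⁻¹' Set.Ici (Real.exp u))).toReal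
          ≥ c₁ * (Real.exp (-(θ * u)) * u ^ a) := hFlow
      have h12 : (ℙ (X ⁻¹' Set.Ici (Real.exp (u + (D:ℝ))))).toReal
          ≤ c₁ / 2 * (Real.exp (-(θ * u)) * u ^ a) := hFup2
      have h13 : (0:ℝ) ≤ Real.exp (-(θ * u)) * u ^ a := by positivity
      nlinarith
    -- G bound
    have hGlow := hYlow (z * Real.exp (-u)) hzYu
    rw [hYarg] at hGlow
    rw [Real.log_exp, ← Real.exp_mul, show (L - u) * -θ = -(θ * (L - u)) by ring] at hGlow
    have hGlow2 : d₁ * (Real.exp (-(θ * (L - u))) * (L / 2) ^ b)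
        ≤ (ℙ (Y ⁻¹' Set.Ici (Real.exp (L - u)))).toReal := by
      refine le_trans ?_ hGlow
      refine mul_le_mul_of_nonneg_left ?_ hd₁.le
      refine mul_le_mul_of_nonneg_left ?_ (Real.exp_pos _).le
      exact pow_le_pow_left₀ (by linarith) (by linarith) b
    -- combine
    rw [hBval j, ← hudef, huD, hYarg]
    have hGnn : (0:ℝ) ≤ (ℙ (Y ⁻¹' Set.Ici (Real.exp (L - u)))).toReal := ENNReal.toReal_nonneg
    calc c₁ * d₁ / 2 * (Real.exp (-(θ * L)) * ((L / 3) ^ a * (L / 2) ^ b))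
        ≤ (c₁ / 2 * (Real.exp (-(θ * u)) * u ^ a))
          * (d₁ * (Real.exp (-(θ * (L - u))) * (L / 2) ^ b)) := by
          have hea : Real.exp (-(θ * u)) * Real.exp (-(θ * (L - u))) = Real.exp (-(θ * L)) := by
            rw [← Real.exp_add]; congr 1; ring
          have hL3a : (L / 3) ^ a ≤ u ^ a := pow_le_pow_left₀ (by linarith) hu_low a
          have h14 : Real.exp (-(θ * L)) * ((L / 3) ^ a * (L / 2) ^ b)
              ≤ Real.exp (-(θ * L)) * (u ^ a * (L / 2) ^ b) := by
            refine mul_le_mul_of_nonneg_left ?_ (Real.exp_pos _).le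
            exact mul_le_mul_of_nonneg_right hL3a (by positivity)
          calc c₁ * d₁ / 2 * (Real.exp (-(θ * L)) * ((L / 3) ^ a * (L / 2) ^ b))
              ≤ c₁ * d₁ / 2 * (Real.exp (-(θ * L)) * (u ^ a * (L / 2) ^ b)) :=
                mul_le_mul_of_nonneg_left h14 (by positivity)
            _ = (c₁ / 2 * (Real.exp (-(θ * u)) * u ^ a))
                * (d₁ * (Real.exp (-(θ * (L - u))) * (L / 2) ^ b)) := by
                rw [← hea]; ring
      _ ≤ ((ℙ (X ⁻¹' Set.Ici (Real.exp u))).toReal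
            - (ℙ (X ⁻¹' Set.Ici (Real.exp (u + (D:ℝ))))).toReal)
          * (ℙ (Y ⁻¹' Set.Ici (Real.exp (L - u)))).toReal := by
          refine mul_le_mul hFdiff hGlow2 (by positivity) ?_
          have h13 : (0:ℝ) ≤ Real.exp (-(θ * u)) * u ^ a := by positivity
          nlinarith [hFdiff, h13]
  -- sum up
  have hsum_ge := Finset.card_nsmul_le_sum (Finset.range N) _ _ hblock
  rw [Finset.card_range, nsmul_eq_mul] at hsum_ge
  have hconst_nn : (0:ℝ) ≤ c₁ * d₁ / 2 * (Real.exp (-(θ * L)) * ((L / 3) ^ a * (L / 2) ^ b)) := by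
    positivity
  have hfinal : c₁ * d₁ / (48 * (D:ℝ) * 3 ^ a * 2 ^ b) * (z ^ (-θ) * L ^ (a + b + 1))
      ≤ (N:ℝ) * (c₁ * d₁ / 2 * (Real.exp (-(θ * L)) * ((L / 3) ^ a * (L / 2) ^ b))) := by
    have h15 : L / (24 * (D:ℝ)) * (c₁ * d₁ / 2 * (Real.exp (-(θ * L)) * ((L / 3) ^ a * (L / 2) ^ b)))
        ≤ (N:ℝ) * (c₁ * d₁ / 2 * (Real.exp (-(θ * L)) * ((L / 3) ^ a * (L / 2) ^ b))) :=
      mul_le_mul_of_nonneg_right hNge hconst_nn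
    refine le_trans (le_of_eq ?_) h15
    rw [hzrpow, div_pow, div_pow, show a + b + 1 = (a + b) + 1 by ring, pow_succ, pow_add]
    field_simp
    ring
  calc c₁ * d₁ / (48 * (D:ℝ) * 3 ^ a * 2 ^ b) * (z ^ (-θ) * L ^ (a + b + 1))
      ≤ (N:ℝ) * (c₁ * d₁ / 2 * (Real.exp (-(θ * L)) * ((L / 3) ^ a * (L / 2) ^ b))) := hfinal
    _ ≤ ∑ j ∈ Finset.range N, (ℙ (B j)).toReal := hsum_ge
    _ ≤ (ℙ {ω | z ≤ X ω * Y ω}).toReal := hsum_le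
lemma two_var {θ : ℝ} (hθ : 0 < θ) (a b : ℕ) {X Y : Ω → ℝ}
    (hXm : Measurable X) (hYm : Measurable Y)
    (hXpos : ∀ᵐ ω ∂ℙ, 0 < X ω) (hYpos : ∀ᵐ ω ∂ℙ, 0 < Y ω)
    (hind : IndepFun X Y ℙ)
    (hA : AsympAtTop (fun z => z ^ (-θ) * Real.log z ^ a)
      (fun z => (ℙ {ω | z ≤ X ω}).toReal))
    (hB : AsympAtTop (fun z => z ^ (-θ) * Real.log z ^ b)
      (fun z => (ℙ {ω | z ≤ Y ω}).toReal)) :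
    AsympAtTop (fun z => z ^ (-θ) * Real.log z ^ (a + b + 1))
      (fun z => (ℙ {ω | z ≤ X ω * Y ω}).toReal) := by
  obtain ⟨c₁, c₂, zX, hc₁, hc12, hzX, hXb⟩ := hA
  obtain ⟨d₁, d₂, zY, hd₁, hd12, hzY, hYb⟩ := hB
  obtain ⟨MX, hMX, hMXb⟩ := upper_global hθ a (fun z => tail_le_one _)
    (lt_of_lt_of_le hc₁ hc12) hzX (fun z hz => (hXb z hz).2)
  obtain ⟨MY, hMY, hMYb⟩ := upper_global hθ b (fun z => tail_le_one _)
    (lt_of_lt_of_le hd₁ hd12) hzY (fun z hz => (hYb z hz).2)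
  have hupper := two_var_upper hθ a b hXm hYm hXpos hYpos hind hMX hMY hMXb hMYb
  obtain ⟨cl, Z₀, hcl, hZ₀, hlow⟩ := two_var_lower hθ a b hXm hYm hind hc₁
    (lt_of_lt_of_le hc₁ hc12) hzX (fun z hz => (hXb z hz).1) (fun z hz => (hXb z hz).2)
    hd₁ hzY (fun z hz => (hYb z hz).1)
  have hCU : 0 < MY + MX * MY * Real.exp θ + MX * Real.exp θ := by positivity
  refine ⟨min cl (MY + MX * MY * Real.exp θ + MX * Real.exp θ),
    MY + MX * MY * Real.exp θ + MX * Real.exp θ, max (Real.exp 1) Z₀,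
    lt_min hcl hCU, min_le_right _ _,
    lt_of_lt_of_le (Real.exp_pos 1) (le_max_left _ _), ?_⟩
  intro z hz
  have hz1 : Real.exp 1 ≤ z := le_trans (le_max_left _ _) hz
  have hzZ : Z₀ ≤ z := le_trans (le_max_right _ _) hz
  have hz0 : (0:ℝ) < z := lt_of_lt_of_le (Real.exp_pos 1) hz1
  have hz1' : (1:ℝ) ≤ z := le_trans (by simpa using Real.exp_le_exp.mpr zero_le_one) hz1
  have hfnn : (0:ℝ) ≤ z ^ (-θ) * Real.log z ^ (a + b + 1) :=
    mul_nonneg (Real.rpow_nonneg hz0.le _) (pow_nonneg (Real.log_nonneg hz1') _)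
  constructor
  · exact le_trans (mul_le_mul_of_nonneg_right (min_le_left _ _) hfnn) (hlow z hzZ)
  · exact hupper z hz1

lemma prod_tail {θ : ℝ} (hθ : 0 < θ) : ∀ (m : ℕ) (a : Fin (m + 1) → ℕ)
    (X : Fin (m + 1) → Ω → ℝ), (∀ i, Measurable (X i)) → (∀ i, ∀ᵐ ω ∂ℙ, 0 < X i ω) →
    iIndepFun X ℙ →
    (∀ i, AsympAtTop (fun z => z ^ (-θ) * Real.log z ^ (a i))
      (fun z => (ℙ {ω | z ≤ X i ω}).toReal)) →
    AsympAtTop (fun z => z ^ (-θ) * Real.log z ^ (∑ i, a i + m))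
      (fun z => (ℙ {ω | z ≤ ∏ i, X i ω}).toReal) := by
  intro m
  induction m with
  | zero =>
    intro a X hm hpos hind ht
    simpa [Fin.sum_univ_one, Fin.prod_univ_one] using ht 0
  | succ m ih =>
    intro a X hm hpos hind ht
    classical
    set Y : Fin (m + 1) → Ω → ℝ := fun i => X i.castSucc with hYdef
    -- independence of the subfamily
    have hindY : iIndepFun Y ℙ := by
      rw [iIndepFun_iff_measure_inter_preimage_eq_mul]
      intro S sets hsets
      set sets' : Fin (m + 2) → Set ℝ :=
        fun j => if h : (j : ℕ) < m + 1 then sets ⟨j, h⟩ else Set.univ with hsets'def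
      have hsets'e : ∀ i : Fin (m + 1), sets' (Fin.castSucc i) = sets i := by
        intro i
        have hlt : ((Fin.castSucc i : Fin (m + 2)) : ℕ) < m + 1 := i.isLt
        simp only [hsets'def]
        rw [dif_pos hlt]
        exact congrArg sets (Fin.val_injective rfl)
      have hmeas' : ∀ j ∈ S.map Fin.castSuccEmb, MeasurableSet (sets' j) := by
        intro j hj
        obtain ⟨i, hi, rfl⟩ := Finset.mem_map.mp hj
        have : (Fin.castSuccEmb i : Fin (m + 2)) = Fin.castSucc i := rfl
        rw [this, hsets'e i]
        exact hsets i hi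
      have key := iIndepFun_iff_measure_inter_preimage_eq_mul.mp hind
        (S.map Fin.castSuccEmb) (sets := sets') hmeas'
      have hInt : (⋂ j ∈ S.map Fin.castSuccEmb, X j ⁻¹' sets' j)
          = ⋂ i ∈ S, Y i ⁻¹' sets i := by
        ext ω
        simp only [Set.mem_iInter, Finset.mem_map]
        constructor
        · intro h i hi
          have h2 := h (Fin.castSucc i) ⟨i, hi, rfl⟩
          rw [hsets'e i] at h2
          exact h2
        · rintro h j ⟨i, hi, rfl⟩
          show ω ∈ X (Fin.castSucc i) ⁻¹' sets' (Fin.castSucc i)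
          rw [hsets'e i]
          exact h i hi
      have hProd : (∏ j ∈ S.map Fin.castSuccEmb, ℙ (X j ⁻¹' sets' j))
          = ∏ i ∈ S, ℙ (Y i ⁻¹' sets i) := by
        rw [Finset.prod_map]
        refine Finset.prod_congr rfl fun i _ => ?_
        show ℙ (X (Fin.castSucc i) ⁻¹' sets' (Fin.castSucc i)) = _
        rw [hsets'e i]
      rw [← hInt, ← hProd]
      exact key
    have ihP := ih (fun i => a i.castSucc) Y (fun i => hm _) (fun i => hpos _) hindY
      (fun i => ht _)
    -- the product of the first m+1 variables, as an element of the Pi monoid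
    set P : Ω → ℝ := ∏ j ∈ Finset.univ.map Fin.castSuccEmb, X j with hPdef
    have hPapp : ∀ ω, P ω = ∏ i : Fin (m + 1), Y i ω := by
      intro ω
      rw [hPdef, Finset.prod_apply, Finset.prod_map]
      rfl
    have hPm : Measurable P := by
      have h0 : Measurable fun ω => ∏ j ∈ Finset.univ.map (Fin.castSuccEmb (n := m + 1)), X j ω :=
        Finset.measurable_prod _ fun j _ => hm j
      have h1 : P = fun ω => ∏ j ∈ Finset.univ.map (Fin.castSuccEmb (n := m + 1)), X j ω := by
        funext ω; rw [hPdef, Finset.prod_apply]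
      rw [h1]; exact h0
    have hPpos : ∀ᵐ ω ∂ℙ, 0 < P ω := by
      have hall : ∀ᵐ ω ∂ℙ, ∀ i : Fin (m + 2), 0 < X i ω := by
        rw [MeasureTheory.ae_all_iff]; exact hpos
      filter_upwards [hall] with ω hω
      rw [hPdef, Finset.prod_apply]
      exact Finset.prod_pos fun j _ => hω j
    have hlast : Fin.last (m + 1) ∉ Finset.univ.map (Fin.castSuccEmb (n := m + 1)) := by
      simp only [Finset.mem_map, Finset.mem_univ, true_and, not_exists]
      intro i hi
      have hi' : Fin.castSucc i = Fin.last (m + 1) := hi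
      have h2 := congrArg Fin.val hi'
      rw [Fin.coe_castSucc, Fin.val_last] at h2
      have := i.isLt
      omega
    have hPind : IndepFun P (X (Fin.last (m + 1))) ℙ := by
      rw [hPdef]
      exact hind.indepFun_finsetProd_of_notMem hm hlast
    have ihP' : AsympAtTop
        (fun z => z ^ (-θ) * Real.log z ^ (∑ i : Fin (m + 1), a i.castSucc + m))
        (fun z => (ℙ {ω | z ≤ P ω}).toReal) := by
      have : (fun z => (ℙ {ω | z ≤ P ω}).toReal)
          = fun z => (ℙ {ω | z ≤ ∏ i : Fin (m + 1), Y i ω}).toReal := by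
        funext z
        congr 1
        congr 1
        ext ω
        rw [Set.mem_setOf_eq, Set.mem_setOf_eq, hPapp ω]
      rw [this]
      exact ihP
    have hfin := two_var hθ (∑ i : Fin (m + 1), a i.castSucc + m) (a (Fin.last (m + 1)))
      hPm (hm _) hPpos (hpos _) hPind ihP' (ht _)
    have hexp : ∑ i : Fin (m + 2), a i + (m + 1)
        = ∑ i : Fin (m + 1), a i.castSucc + m + a (Fin.last (m + 1)) + 1 := by
      rw [Fin.sum_univ_castSucc]; omega
    have hfun : (fun z => (ℙ {ω | z ≤ ∏ i : Fin (m + 2), X i ω}).toReal)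
        = fun z => (ℙ {ω | z ≤ P ω * X (Fin.last (m + 1)) ω}).toReal := by
      funext z
      congr 1
      congr 1
      ext ω
      rw [Set.mem_setOf_eq, Set.mem_setOf_eq, Fin.prod_univ_castSucc, hPapp ω]
    rw [hexp, hfun]
    exact hfin
end

theorem stmt_2 {Ω : Type*} [MeasureSpace Ω] [IsProbabilityMeasure (ℙ : Measure Ω)]
    (θ : ℝ) (hθ : 0 < θ) (m : ℕ) (hm : 1 ≤ m) (a : Fin m → ℕ)
    (X : Fin m → Ω → ℝ) (hXm : ∀ i, Measurable (X i))
    (hXpos : ∀ i, ∀ᵐ ω ∂ℙ, 0 < X i ω)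
    (hindep : iIndepFun X ℙ)
    (ht : ∀ i, AsympAtTop (fun z => z ^ (-θ) * Real.log z ^ (a i))
      (fun z => (ℙ {ω | z ≤ X i ω}).toReal)) :
    AsympAtTop (fun z => z ^ (-θ) * Real.log z ^ (∑ i, a i + m - 1))
      (fun z => (ℙ {ω | z ≤ ∏ i, X i ω}).toReal) := by
  obtain ⟨m', rfl⟩ : ∃ m', m = m' + 1 := ⟨m - 1, by omega⟩
  have h := prod_tail hθ m' a X hXm hXpos hindep ht
  have he : ∑ i, a i + (m' + 1) - 1 = ∑ i, a i + m' := by omega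
  rw [he]
  exact h
end

section
/- Let γ ∈ (0, 1/2) and let ℓ be a positive random variable such that there is an open interval I containing 1 with E[ℓ^{s-1}] finite and equal to sin(πγs)/sin(π(1-γ)s) for every s ∈ I. Then E[|log ℓ|] < ∞ and E[log ℓ] = π cot(πγ) > 0. -/
open MeasureTheory ProbabilityTheory Real

private lemma log_abs_le {x : ℝ} (hx : 0 < x) {ε : ℝ} (hε : 0 < ε) :
    |Real.log x| ≤ (x ^ ε + x ^ (-ε)) / ε := by
  rw [le_div_iff₀ hε]
  have hpε : (0:ℝ) < x ^ ε := Real.rpow_pos_of_pos hx ε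
  have hnε : (0:ℝ) < x ^ (-ε) := Real.rpow_pos_of_pos hx (-ε)
  rcases le_total 1 x with h | h
  · rw [abs_of_nonneg (Real.log_nonneg h)]
    have h1 : Real.log (x ^ ε) ≤ x ^ ε - 1 :=
      Real.log_le_sub_one_of_pos hpε
    rw [Real.log_rpow hx] at h1
    nlinarith
  · rw [abs_of_nonpos (Real.log_nonpos hx.le h)]
    have h1 : Real.log (x ^ (-ε)) ≤ x ^ (-ε) - 1 :=
      Real.log_le_sub_one_of_pos hnε
    rw [Real.log_rpow hx] at h1
    nlinarith

private lemma rpow_le_sum {x : ℝ} (hx : 0 < x) {ε t : ℝ} (ht : |t| ≤ ε) :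
    x ^ t ≤ x ^ ε + x ^ (-ε) := by
  have hpε : (0:ℝ) < x ^ ε := Real.rpow_pos_of_pos hx ε
  have hnε : (0:ℝ) < x ^ (-ε) := Real.rpow_pos_of_pos hx (-ε)
  rcases le_total 1 x with h | h
  · have : x ^ t ≤ x ^ ε := Real.rpow_le_rpow_of_exponent_le h (le_of_abs_le ht)
    linarith
  · have : x ^ t ≤ x ^ (-ε) := Real.rpow_le_rpow_of_exponent_ge hx h (neg_le_of_abs_le ht)
    linarith

private lemma key_bound {x : ℝ} (hx : 0 < x) {ε t : ℝ} (hε : 0 < ε) (ht : |t| ≤ ε) :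
    |Real.log x * x ^ t| ≤ (x ^ (2*ε) + 2 + x ^ (-(2*ε))) / ε := by
  have hxt : (0:ℝ) ≤ x ^ t := (Real.rpow_pos_of_pos hx t).le
  have hpε : (0:ℝ) < x ^ ε := Real.rpow_pos_of_pos hx ε
  have hnε : (0:ℝ) < x ^ (-ε) := Real.rpow_pos_of_pos hx (-ε)
  have h1 := log_abs_le hx hε
  have h2 := rpow_le_sum hx ht
  have e1 : x ^ ε * x ^ ε = x ^ (2*ε) := by
    rw [← Real.rpow_add hx]; ring_nf
  have e2 : x ^ ε * x ^ (-ε) = 1 := by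
    rw [← Real.rpow_add hx]; simp
  have e3 : x ^ (-ε) * x ^ (-ε) = x ^ (-(2*ε)) := by
    rw [← Real.rpow_add hx]; ring_nf
  calc |Real.log x * x ^ t| = |Real.log x| * x ^ t := by
        rw [abs_mul, abs_of_nonneg hxt]
    _ ≤ ((x ^ ε + x ^ (-ε)) / ε) * (x ^ ε + x ^ (-ε)) := by
        apply mul_le_mul h1 h2 hxt
        positivity
    _ = (x ^ (2*ε) + 2 + x ^ (-(2*ε))) / ε := by
        rw [div_mul_eq_mul_div]
        congr 1
        calc (x ^ ε + x ^ (-ε)) * (x ^ ε + x ^ (-ε))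
            = x ^ ε * x ^ ε + 2 * (x ^ ε * x ^ (-ε)) + x ^ (-ε) * x ^ (-ε) := by ring
          _ = x ^ (2*ε) + 2 + x ^ (-(2*ε)) := by rw [e1, e2, e3]; ring

theorem stmt_4 {Ω : Type*} [MeasureSpace Ω] [IsProbabilityMeasure (ℙ : Measure Ω)]
    (γ : ℝ) (hγ : γ ∈ Set.Ioo (0 : ℝ) (1 / 2))
    (ℓ : Ω → ℝ) (hmeas : Measurable ℓ) (hpos : ∀ᵐ ω ∂ℙ, 0 < ℓ ω)
    (a b : ℝ) (ha : a < 1) (hb : 1 < b)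
    (hmellin : ∀ s ∈ Set.Ioo a b,
      Integrable (fun ω => ℓ ω ^ (s - 1)) ℙ ∧
      ∫ ω, ℓ ω ^ (s - 1) ∂ℙ = Real.sin (π * γ * s) / Real.sin (π * (1 - γ) * s)) :
    Integrable (fun ω => |Real.log (ℓ ω)|) ℙ ∧
    ∫ ω, Real.log (ℓ ω) ∂ℙ = π * Real.cot (π * γ) ∧
    0 < π * Real.cot (π * γ) := by
  obtain ⟨hγ0, hγ2⟩ := hγ
  have hπ : (0:ℝ) < π := Real.pi_pos
  -- basic positivity for trig
  have hπγ0 : 0 < π * γ := by positivity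
  have hπγ2 : π * γ < π / 2 := by nlinarith
  have hsinγ : 0 < Real.sin (π * γ) :=
    Real.sin_pos_of_pos_of_lt_pi hπγ0 (by nlinarith)
  have hcosγ : 0 < Real.cos (π * γ) :=
    Real.cos_pos_of_mem_Ioo ⟨by nlinarith, hπγ2⟩
  have hcotpos : 0 < π * Real.cot (π * γ) := by
    rw [Real.cot_eq_cos_div_sin]; positivity
  -- choose ε
  set ε : ℝ := min (1 - a) (b - 1) / 4 with hεdef
  have hε : 0 < ε := by
    apply div_pos _ (by norm_num)
    exact lt_min (by linarith) (by linarith)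
  have hεa : a < 1 - 2*ε := by
    have : ε ≤ (1 - a) / 4 := by
      apply div_le_div_of_nonneg_right (min_le_left _ _) (by norm_num)
    linarith
  have hεb : 1 + 2*ε < b := by
    have : ε ≤ (b - 1) / 4 := by
      apply div_le_div_of_nonneg_right (min_le_right _ _) (by norm_num)
    linarith
  -- the three integrability facts from hmellin
  have hI0 : Integrable (fun ω => ℓ ω ^ ((1:ℝ) - 1)) ℙ :=
    (hmellin 1 ⟨ha, hb⟩).1
  have hIp : Integrable (fun ω => ℓ ω ^ (2*ε)) ℙ := by
    have h := (hmellin (1 + 2*ε) ⟨by linarith, hεb⟩).1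
    have : (1 + 2*ε) - 1 = 2*ε := by ring
    rwa [this] at h
  have hIn : Integrable (fun ω => ℓ ω ^ (-(2*ε))) ℙ := by
    have h := (hmellin (1 - 2*ε) ⟨hεa, by linarith⟩).1
    have : (1 - 2*ε) - 1 = -(2*ε) := by ring
    rwa [this] at h
  have hbound_int : Integrable (fun ω => (ℓ ω ^ (2*ε) + 2 + ℓ ω ^ (-(2*ε))) / ε) ℙ :=
    ((hIp.add (integrable_const 2)).add hIn).div_const ε
  -- dominated differentiation
  set F : ℝ → Ω → ℝ := fun s ω => ℓ ω ^ (s - 1) with hF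
  set F' : ℝ → Ω → ℝ := fun s ω => Real.log (ℓ ω) * ℓ ω ^ (s - 1) with hF'
  have hF_meas : ∀ s : ℝ, AEStronglyMeasurable (F s) ℙ := by
    intro s
    exact (Measurable.aestronglyMeasurable (by fun_prop))
  have hF'_meas : AEStronglyMeasurable (F' 1) ℙ := by
    apply Measurable.aestronglyMeasurable
    exact (Real.measurable_log.comp hmeas).mul (by fun_prop)
  have h_bound : ∀ᵐ ω ∂ℙ, ∀ s ∈ Metric.ball (1:ℝ) ε,
      ‖F' s ω‖ ≤ (ℓ ω ^ (2*ε) + 2 + ℓ ω ^ (-(2*ε))) / ε := by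
    filter_upwards [hpos] with ω hω s hs
    rw [Metric.mem_ball, Real.dist_eq] at hs
    exact key_bound hω hε (le_of_lt hs)
  have h_diff : ∀ᵐ ω ∂ℙ, ∀ s ∈ Metric.ball (1:ℝ) ε,
      HasDerivAt (fun s => F s ω) (F' s ω) s := by
    filter_upwards [hpos] with ω hω s _
    have h1 : HasDerivAt (fun u : ℝ => ℓ ω ^ u) (ℓ ω ^ (s - 1) * Real.log (ℓ ω)) (s - 1) :=
      (Real.hasStrictDerivAt_const_rpow hω (s - 1)).hasDerivAt
    have h2 : HasDerivAt (fun s : ℝ => s - 1) 1 s := (hasDerivAt_id s).sub_const 1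
    have := h1.comp s h2
    rw [mul_one, mul_comm] at this
    exact this
  have hDC := hasDerivAt_integral_of_dominated_loc_of_deriv_le (Metric.ball_mem_nhds 1 hε)
    (Filter.Eventually.of_forall hF_meas) hI0 hF'_meas h_bound hbound_int h_diff
  -- identify F' 1 with log ℓ
  have hF'1 : (fun ω => F' 1 ω) = fun ω => Real.log (ℓ ω) := by
    funext ω
    simp [hF']
  have hint_log : Integrable (fun ω => Real.log (ℓ ω)) ℙ := by
    rw [← hF'1]; exact hDC.1
  have habs : Integrable (fun ω => |Real.log (ℓ ω)|) ℙ := hint_log.abs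
  -- the RHS function
  set g : ℝ → ℝ := fun s => Real.sin (π * γ * s) / Real.sin (π * (1 - γ) * s) with hg
  have hsin1 : Real.sin (π * (1 - γ) * 1) = Real.sin (π * γ) := by
    rw [mul_one]
    have : π * (1 - γ) = π - π * γ := by ring
    rw [this, Real.sin_pi_sub]
  have hcos1 : Real.cos (π * (1 - γ) * 1) = -Real.cos (π * γ) := by
    rw [mul_one]
    have : π * (1 - γ) = π - π * γ := by ring
    rw [this, Real.cos_pi_sub]
  have hsinne : Real.sin (π * (1 - γ) * 1) ≠ 0 := by
    rw [hsin1]; exact ne_of_gt hsinγ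
  -- derivative of g at 1
  have hnum : HasDerivAt (fun s => Real.sin (π * γ * s)) (Real.cos (π * γ * 1) * (π * γ)) 1 := by
    have h2 : HasDerivAt (fun s : ℝ => π * γ * s) (π * γ) 1 := by
      simpa using (hasDerivAt_id (1:ℝ)).const_mul (π * γ)
    exact (Real.hasDerivAt_sin (π * γ * 1)).comp 1 h2
  have hden : HasDerivAt (fun s => Real.sin (π * (1 - γ) * s))
      (Real.cos (π * (1 - γ) * 1) * (π * (1 - γ))) 1 := by
    have h2 : HasDerivAt (fun s : ℝ => π * (1 - γ) * s) (π * (1 - γ)) 1 := by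
      simpa using (hasDerivAt_id (1:ℝ)).const_mul (π * (1 - γ))
    exact (Real.hasDerivAt_sin (π * (1 - γ) * 1)).comp 1 h2
  have hgderiv : HasDerivAt g
      ((Real.cos (π * γ * 1) * (π * γ) * Real.sin (π * (1 - γ) * 1) -
        Real.sin (π * γ * 1) * (Real.cos (π * (1 - γ) * 1) * (π * (1 - γ)))) /
        (Real.sin (π * (1 - γ) * 1)) ^ 2) 1 := hnum.div hden hsinne
  have hderiv_val :
      (Real.cos (π * γ * 1) * (π * γ) * Real.sin (π * (1 - γ) * 1) -
        Real.sin (π * γ * 1) * (Real.cos (π * (1 - γ) * 1) * (π * (1 - γ)))) /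
        (Real.sin (π * (1 - γ) * 1)) ^ 2 = π * Real.cot (π * γ) := by
    rw [hsin1, hcos1, mul_one, Real.cot_eq_cos_div_sin]
    field_simp
    ring
  rw [hderiv_val] at hgderiv
  -- the integral function agrees with g near 1
  have hagree : g =ᶠ[nhds (1:ℝ)] fun s => ∫ ω, F s ω ∂ℙ := by
    have hmem : Set.Ioo a b ∈ nhds (1:ℝ) := Ioo_mem_nhds ha hb
    filter_upwards [hmem] with s hs
    exact ((hmellin s hs).2).symm
  have hgderiv2 : HasDerivAt g (∫ ω, F' 1 ω ∂ℙ) 1 :=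
    hDC.2.congr_of_eventuallyEq hagree
  have huniq : ∫ ω, F' 1 ω ∂ℙ = π * Real.cot (π * γ) :=
    hgderiv2.unique hgderiv
  have hfinal : ∫ ω, Real.log (ℓ ω) ∂ℙ = π * Real.cot (π * γ) := by
    rw [← hF'1] at *
    exact huniq
  exact ⟨habs, hfinal, hcotpos⟩
end
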